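/- arXiv:2006.06838 — 8 statements merged into one kernel-verified Lean document; each statement's English description precedes it below -/
import Mathlib

section
/- There exist a constant K > 0 and N ∈ ℕ such that for all n ≥ N and all pairs (z,c) ∈ Ω_n (i.e. z,c ∈ ℕ with z ≤ n^{1/3} r and c ≤ n^{2/3} T r), one has |μ(n,z,c) − z − n^{−1/3} z (λ − n^{−2/3} c)| ≤ K n^{−1/3}. (Lemma 3.1, mean expansion.) -/
open Filter Real

private lemma pow_upper_aux (p : ℝ) (hp0 : 0 ≤ p) (hp1 : p ≤ 1) :
    ∀ z : ℕ, (1 - p) ^ z ≤ 1 - z * p + (z * p) ^ 2 / 2 := by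
  intro z
  induction z with
  | zero => norm_num
  | succ z ih =>
    have h1 : (0:ℝ) ≤ 1 - p := by linarith
    have h2 := mul_le_mul_of_nonneg_right ih h1
    have hz0 : (0:ℝ) ≤ (z:ℝ) := Nat.cast_nonneg z
    calc (1 - p) ^ (z + 1) = (1 - p) ^ z * (1 - p) := by ring
      _ ≤ (1 - z * p + (z * p) ^ 2 / 2) * (1 - p) := h2
      _ ≤ 1 - (z + 1 : ℕ) * p + ((z + 1 : ℕ) * p) ^ 2 / 2 := by
          push_cast
          nlinarith [sq_nonneg p, mul_nonneg (mul_nonneg (mul_nonneg hz0 hz0) hp0)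
            (mul_nonneg hp0 hp0)]

private lemma pow_lower_aux (p : ℝ) (hp1 : p ≤ 1) (z : ℕ) :
    1 - z * p ≤ (1 - p) ^ z := by
  have h := one_add_mul_le_pow (a := -p) (by linarith) z
  calc 1 - z * p = 1 + z * (-p) := by ring
    _ ≤ (1 + -p) ^ z := h
    _ = (1 - p) ^ z := by ring_nf

set_option maxHeartbeats 1000000 in
/-- Lemma 3.1 (mean expansion). Fix `λ ∈ ℝ`, `r > 0`, `T > 0`. With
`p n = n⁻¹ + λ n^(-4/3)`, `q n z = 1 - (1 - p n)^z` and mean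
`μ n z c = (n - c) * q n z` of the binomial `Bin(n - c, q n z)`, there exist `K > 0`
and `N` such that for all `n ≥ N` and all `(z, c) ∈ Ω_n` (i.e. `z ≤ n^(1/3) r` and
`c ≤ n^(2/3) T r`), `|μ(n,z,c) - z - n^(-1/3) z (λ - n^(-2/3) c)| ≤ K n^(-1/3)`. -/
theorem stmt_0 (lam r T : ℝ) (hr : 0 < r) (hT : 0 < T)
    (p : ℕ → ℝ) (hp : ∀ n : ℕ, p n = (n : ℝ)⁻¹ + lam * (n : ℝ) ^ (-(4 : ℝ) / 3))
    (q : ℕ → ℕ → ℝ) (hq : ∀ (n : ℕ) (z : ℕ), q n z = 1 - (1 - p n) ^ z)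
    (μ : ℕ → ℕ → ℕ → ℝ)
    (hμ : ∀ (n : ℕ) (z c : ℕ), μ n z c = ((n : ℝ) - (c : ℝ)) * q n z) :
    ∃ K : ℝ, 0 < K ∧ ∃ N : ℕ, ∀ n : ℕ, N ≤ n → ∀ z c : ℕ,
      (z : ℝ) ≤ (n : ℝ) ^ ((1 : ℝ) / 3) * r →
      (c : ℝ) ≤ (n : ℝ) ^ ((2 : ℝ) / 3) * T * r →
      |μ n z c - (z : ℝ)
          - (n : ℝ) ^ (-(1 : ℝ) / 3) * (z : ℝ) * (lam - (n : ℝ) ^ (-(2 : ℝ) / 3) * (c : ℝ))|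
        ≤ K * (n : ℝ) ^ (-(1 : ℝ) / 3) := by
  refine ⟨r ^ 2 * T * |lam| + (9/8) * r ^ 2 + 1, by positivity, ?_⟩
  set ε : ℝ := min (1 / (2 * (|lam| + 1))) (1 / (T * r + 1)) with hε
  have hε0 : 0 < ε := by
    apply lt_min <;> positivity
  have hcont : Tendsto (fun n : ℕ => ((n:ℝ)) ^ (-(1:ℝ)/3)) atTop (nhds 0) := by
    have h := tendsto_rpow_neg_atTop (y := (1:ℝ)/3) (by norm_num)
    have h2 := h.comp (tendsto_natCast_atTop_atTop (R := ℝ))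
    simpa [Function.comp_def, neg_div] using h2
  have hev : ∀ᶠ n : ℕ in atTop, (n:ℝ) ^ (-(1:ℝ)/3) < ε :=
    hcont.eventually_lt_const hε0
  obtain ⟨N₁, hN₁⟩ := eventually_atTop.mp hev
  refine ⟨max N₁ 2, ?_⟩
  intro n hn z c hz hc
  have hn2 : 2 ≤ n := le_trans (le_max_right _ _) hn
  have hxx : (2:ℝ) ≤ (n:ℝ) := by exact_mod_cast hn2
  have hx0 : (0:ℝ) < (n:ℝ) := by linarith
  set s : ℝ := (n:ℝ) ^ (-(1:ℝ)/3) with hsdef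
  have hs0 : 0 < s := Real.rpow_pos_of_pos hx0 _
  have hsε : s < ε := hN₁ n (le_trans (le_max_left _ _) hn)
  -- smallness conditions
  have hls : |lam| * s ≤ 1/2 := by
    have h1 : s < 1/(2*(|lam|+1)) := lt_of_lt_of_le hsε (min_le_left _ _)
    have hl1 : (0:ℝ) < |lam| + 1 := by positivity
    have h2 : (|lam|+1) * (1/(2*(|lam|+1))) = 1/2 := by field_simp
    nlinarith [abs_nonneg lam, hs0.le, mul_lt_mul_of_pos_left h1 hl1]
  have hTrs : T * r * s ≤ 1 := by
    have h1 : s < 1/(T*r+1) := lt_of_lt_of_le hsε (min_le_right _ _)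
    have hl1 : (0:ℝ) < T*r + 1 := by positivity
    have h2 : (T*r+1) * (1/(T*r+1)) = 1 := by field_simp
    nlinarith [hs0.le, mul_lt_mul_of_pos_left h1 hl1, mul_pos hT hr]
  -- rpow identities
  have hs3 : s ^ 3 = ((n:ℝ))⁻¹ := by
    rw [hsdef, ← Real.rpow_natCast ((n:ℝ) ^ (-(1:ℝ)/3)) 3, ← Real.rpow_mul hx0.le]
    norm_num [Real.rpow_neg_one]
  have hs4 : (n:ℝ) ^ (-(4:ℝ)/3) = s ^ 4 := by
    rw [hsdef, ← Real.rpow_natCast ((n:ℝ) ^ (-(1:ℝ)/3)) 4, ← Real.rpow_mul hx0.le]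
    norm_num
  have h23 : (n:ℝ) ^ (-(2:ℝ)/3) = s ^ 2 := by
    rw [hsdef, ← Real.rpow_natCast ((n:ℝ) ^ (-(1:ℝ)/3)) 2, ← Real.rpow_mul hx0.le]
    norm_num
  have h13 : (n:ℝ) ^ ((1:ℝ)/3) = (n:ℝ) * s ^ 2 := by
    rw [show ((1:ℝ)/3) = 1 + (-(2:ℝ)/3) by norm_num, Real.rpow_add hx0, Real.rpow_one, h23]
  have hx23 : (n:ℝ) ^ ((2:ℝ)/3) = (n:ℝ) * s := by
    rw [show ((2:ℝ)/3) = 1 + (-(1:ℝ)/3) by norm_num, Real.rpow_add hx0, Real.rpow_one, ← hsdef]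
  have hs3x : s ^ 3 * (n:ℝ) = 1 := by rw [hs3]; field_simp
  have hs32 : s ^ 3 ≤ 1/2 := by
    rw [hs3]
    rw [show ((1:ℝ)/2) = (2:ℝ)⁻¹ by norm_num]
    exact inv_anti₀ (by norm_num) hxx
  rw [h13] at hz
  rw [hx23] at hc
  -- p value and bounds
  have hpval : p n = s ^ 3 + lam * s ^ 4 := by rw [hp n, hs4, ← hs3]
  have e1 : lam * s ^ 4 ≤ (1/2) * s ^ 3 := by
    calc lam * s ^ 4 ≤ |lam| * s ^ 4 :=
          mul_le_mul_of_nonneg_right (le_abs_self lam) (by positivity)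
      _ = (|lam| * s) * s ^ 3 := by ring
      _ ≤ (1/2) * s ^ 3 := mul_le_mul_of_nonneg_right hls (by positivity)
  have e2 : -((1/2) * s ^ 3) ≤ lam * s ^ 4 := by
    calc -((1/2) * s ^ 3) ≤ -((|lam| * s) * s ^ 3) := by
          apply neg_le_neg
          exact mul_le_mul_of_nonneg_right hls (by positivity)
      _ = (-|lam|) * s ^ 4 := by ring
      _ ≤ lam * s ^ 4 := mul_le_mul_of_nonneg_right (neg_abs_le lam) (by positivity)
  have hp0 : 0 ≤ p n := by rw [hpval]; nlinarith [e2, pow_pos hs0 3]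
  have hp1 : p n ≤ 1 := by rw [hpval]; linarith [e1, hs32, (pow_pos hs0 3).le]
  have hpb : p n ≤ (3/2) * s ^ 3 := by rw [hpval]; linarith [e1]
  -- binomial expansion bound
  have hqb : |q n z - z * p n| ≤ (z * p n) ^ 2 / 2 := by
    rw [hq n z, abs_le]
    constructor
    · have h := pow_upper_aux (p n) hp0 hp1 z
      linarith
    · have h := pow_lower_aux (p n) hp1 z
      linarith [sq_nonneg ((z:ℝ) * p n)]
  have hz0 : (0:ℝ) ≤ (z:ℝ) := Nat.cast_nonneg z
  have hc0 : (0:ℝ) ≤ (c:ℝ) := Nat.cast_nonneg c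
  have hcx : (c:ℝ) ≤ (n:ℝ) := by nlinarith [hTrs, hx0]
  have hzp0 : 0 ≤ (z:ℝ) * p n := mul_nonneg hz0 hp0
  have hzpb : (z:ℝ) * p n ≤ (3/2) * r * s ^ 2 := by
    calc (z:ℝ) * p n ≤ ((n:ℝ) * s ^ 2 * r) * ((3/2) * s ^ 3) := by
          apply mul_le_mul hz hpb hp0
          positivity
      _ = (3/2) * r * s ^ 2 * (s ^ 3 * (n:ℝ)) := by ring
      _ = (3/2) * r * s ^ 2 := by rw [hs3x]; ring
  -- term A
  have hA : |((n:ℝ) - (c:ℝ)) * (q n z - z * p n)| ≤ (9/8) * r ^ 2 * s := by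
    rw [abs_mul]
    have h1 : |(n:ℝ) - (c:ℝ)| ≤ (n:ℝ) := by
      rw [abs_of_nonneg (by linarith)]; linarith
    calc |(n:ℝ) - (c:ℝ)| * |q n z - z * p n| ≤ (n:ℝ) * ((z * p n) ^ 2 / 2) :=
          mul_le_mul h1 hqb (abs_nonneg _) hx0.le
      _ ≤ (n:ℝ) * (((3/2) * r * s ^ 2) ^ 2 / 2) := by
          have h2 := pow_le_pow_left₀ hzp0 hzpb 2
          have h3 := mul_le_mul_of_nonneg_left h2 hx0.le
          linarith
      _ = (9/8) * r ^ 2 * s * (s ^ 3 * (n:ℝ)) := by ring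
      _ = (9/8) * r ^ 2 * s := by rw [hs3x]; ring
  -- term B
  have hB : |(z:ℝ) * (c:ℝ) * lam * s ^ 4| ≤ r ^ 2 * T * |lam| * s := by
    have habs : |(z:ℝ) * (c:ℝ) * lam * s ^ 4| = (z:ℝ) * (c:ℝ) * |lam| * s ^ 4 := by
      rw [abs_mul, abs_mul, abs_mul, abs_of_nonneg hz0, abs_of_nonneg hc0,
        abs_of_nonneg (pow_nonneg hs0.le 4)]
    rw [habs]
    calc (z:ℝ) * (c:ℝ) * |lam| * s ^ 4
        = ((z:ℝ) * (c:ℝ)) * (|lam| * s ^ 4) := by ring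
      _ ≤ (((n:ℝ) * s ^ 2 * r) * ((n:ℝ) * s * T * r)) * (|lam| * s ^ 4) :=
          mul_le_mul_of_nonneg_right
            (mul_le_mul hz hc hc0 (by positivity)) (by positivity)
      _ = r ^ 2 * T * |lam| * s * ((s ^ 3 * (n:ℝ)) ^ 2) := by ring
      _ = r ^ 2 * T * |lam| * s := by rw [hs3x]; ring
  -- key identity
  have key : μ n z c - (z:ℝ) - s * (z:ℝ) * (lam - s ^ 2 * (c:ℝ))
      = ((n:ℝ) - (c:ℝ)) * (q n z - z * p n) - (z:ℝ) * (c:ℝ) * lam * s ^ 4 := by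
    rw [hμ n z c, hpval]
    linear_combination ((z:ℝ) + (z:ℝ) * lam * s) * hs3x
  rw [h23, key]
  calc |((n:ℝ) - (c:ℝ)) * (q n z - z * p n) - (z:ℝ) * (c:ℝ) * lam * s ^ 4|
      ≤ |((n:ℝ) - (c:ℝ)) * (q n z - z * p n)| + |(z:ℝ) * (c:ℝ) * lam * s ^ 4| := abs_sub _ _
    _ ≤ (9/8) * r ^ 2 * s + r ^ 2 * T * |lam| * s := add_le_add hA hB
    _ ≤ (r ^ 2 * T * |lam| + (9/8) * r ^ 2 + 1) * s := by nlinarith [hs0.le]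
end

section
/- There exist a constant K > 0 and N ∈ ℕ such that for all n ≥ N and all pairs (z,c) ∈ Ω_n (i.e. z,c ∈ ℕ with z ≤ n^{1/3} r and c ≤ n^{2/3} T r), one has |σ²(n,z,c) − z − n^{−1/3} z (λ − n^{−2/3} c)| ≤ K n^{−1/3}. (Lemma 3.1, variance expansion.) -/
lemma quad_bound (P : ℝ) (hp0 : 0 ≤ P) (hp1 : P ≤ 1) :
    ∀ z : ℕ, (1 - P) ^ z ≤ 1 - z * P + (z * P) ^ 2 / 2 := by
  intro z
  induction z with
  | zero => norm_num
  | succ k ih =>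
    have h1 : (0:ℝ) ≤ 1 - P := by linarith
    have hk : (0:ℝ) ≤ (k:ℝ) := Nat.cast_nonneg k
    have hmul := mul_le_mul_of_nonneg_right ih h1
    rw [pow_succ]
    push_cast
    nlinarith [sq_nonneg ((k:ℝ)*P), mul_nonneg (mul_nonneg hk hp0) (mul_nonneg (mul_nonneg hk hp0) hp0)]

set_option maxHeartbeats 2000000 in
/-- Lemma 3.1 (variance expansion). With `p n = n⁻¹ + λ n^(-4/3)`,
`q n z = 1 - (1 - p n)^z` and variance `σ² n z c = (n - c) * q n z * (1 - q n z)` of the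
binomial `Bin(n - c, q n z)`, there exist `K > 0` and `N` such that for all `n ≥ N` and
all `(z, c) ∈ Ω_n` (i.e. `z ≤ n^(1/3) r` and `c ≤ n^(2/3) T r`),
`|σ²(n,z,c) - z - n^(-1/3) z (λ - n^(-2/3) c)| ≤ K n^(-1/3)`. -/
theorem stmt_1 (lam r T : ℝ) (hr : 0 < r) (hT : 0 < T)
    (p : ℕ → ℝ) (hp : ∀ n : ℕ, p n = (n : ℝ)⁻¹ + lam * (n : ℝ) ^ (-(4 : ℝ) / 3))
    (q : ℕ → ℕ → ℝ) (hq : ∀ (n : ℕ) (z : ℕ), q n z = 1 - (1 - p n) ^ z)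
    (σsq : ℕ → ℕ → ℕ → ℝ)
    (hσ : ∀ (n : ℕ) (z c : ℕ), σsq n z c = ((n : ℝ) - (c : ℝ)) * q n z * (1 - q n z)) :
    ∃ K : ℝ, 0 < K ∧ ∃ N : ℕ, ∀ n : ℕ, N ≤ n → ∀ z c : ℕ,
      (z : ℝ) ≤ (n : ℝ) ^ ((1 : ℝ) / 3) * r →
      (c : ℝ) ≤ (n : ℝ) ^ ((2 : ℝ) / 3) * T * r →
      |σsq n z c - (z : ℝ)
          - (n : ℝ) ^ (-(1 : ℝ) / 3) * (z : ℝ) * (lam - (n : ℝ) ^ (-(2 : ℝ) / 3) * (c : ℝ))|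
        ≤ K * (n : ℝ) ^ (-(1 : ℝ) / 3) := by
  set M : ℝ := max (max |lam| (T * r)) 2 with hMdef
  clear_value M
  have hM2 : (2:ℝ) ≤ M := hMdef ▸ le_max_right _ _
  have hMl : |lam| ≤ M := hMdef ▸ le_trans (le_max_left _ _) (le_max_left _ _)
  have hMtr : T * r ≤ M := hMdef ▸ le_trans (le_max_right _ _) (le_max_left _ _)
  clear hMdef
  refine ⟨2*r^2 + 4*r^2 + |lam| * T * r^2 + 1, by positivity, ?_⟩
  obtain ⟨N, hN⟩ := exists_nat_ge (M ^ 3)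
  refine ⟨N, ?_⟩
  intro n hn z c hz hc
  have hM0 : (0:ℝ) < M := by linarith
  have hxM : M ^ 3 ≤ (n:ℝ) := hN.trans (by exact_mod_cast Nat.cast_le.mpr hn)
  have hx0 : (0:ℝ) < (n:ℝ) := lt_of_lt_of_le (pow_pos hM0 3) hxM
  -- introduce t = n^(1/3) and convert all rpow expressions
  obtain ⟨t, htdef⟩ : ∃ t : ℝ, t = (n:ℝ) ^ ((1:ℝ)/3) := ⟨_, rfl⟩
  have ht0 : 0 < t := htdef ▸ Real.rpow_pos_of_pos hx0 _
  have ht3 : t ^ 3 = (n:ℝ) := by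
    rw [htdef, ← Real.rpow_natCast ((n:ℝ) ^ ((1:ℝ)/3)) 3, ← Real.rpow_mul hx0.le]
    norm_num
  have e1 : (n:ℝ) ^ (-(1:ℝ)/3) = t⁻¹ := by
    rw [show -(1:ℝ)/3 = -(1/3) by norm_num, Real.rpow_neg hx0.le, htdef]
  have e2 : (n:ℝ) ^ (-(2:ℝ)/3) = (t⁻¹)^2 := by
    rw [show -(2:ℝ)/3 = -((1/3)*(2:ℕ)) by norm_num, Real.rpow_neg hx0.le,
      Real.rpow_mul hx0.le, Real.rpow_natCast, ← htdef, inv_pow]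
  have e4 : (n:ℝ) ^ (-(4:ℝ)/3) = (t⁻¹)^4 := by
    rw [show -(4:ℝ)/3 = -((1/3)*(4:ℕ)) by norm_num, Real.rpow_neg hx0.le,
      Real.rpow_mul hx0.le, Real.rpow_natCast, ← htdef, inv_pow]
  have einv : ((n:ℝ))⁻¹ = (t⁻¹)^3 := by rw [← ht3, inv_pow]
  have hz' : (z:ℝ) ≤ t * r := by rw [htdef]; exact hz
  have hc' : (c:ℝ) ≤ t^2 * T * r := by
    have e : (n:ℝ) ^ ((2:ℝ)/3) = t^2 := by
      rw [show (2:ℝ)/3 = (1/3)*(2:ℕ) by norm_num, Real.rpow_mul hx0.le,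
        Real.rpow_natCast, ← htdef]
    rw [← e]; exact hc
  have htM : M ≤ t := by
    by_contra h
    push_neg at h
    have := pow_lt_pow_left₀ h ht0.le (n := 3) (by norm_num)
    rw [ht3] at this; linarith
  have ht2 : (2:ℝ) ≤ t := hM2.trans htM
  -- P and Q as opaque reals
  obtain ⟨P, hPdef⟩ : ∃ P : ℝ, P = p n := ⟨_, rfl⟩
  obtain ⟨Q, hQdef⟩ : ∃ Q : ℝ, Q = q n z := ⟨_, rfl⟩
  obtain ⟨s, hsdef⟩ : ∃ s : ℝ, s = t⁻¹ := ⟨_, rfl⟩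
  have hPval : P = s^3 + lam * s^4 := by rw [hPdef, hp n, einv, e4, hsdef]
  have hQval : Q = 1 - (1 - P)^z := by rw [hQdef, hq n z, hPdef]
  have hs0 : 0 < s := hsdef ▸ inv_pos.mpr ht0
  have hst : s * t = 1 := hsdef ▸ inv_mul_cancel₀ ht0.ne'
  have hs12 : s ≤ 1/2 := by
    rw [hsdef, inv_le_comm₀ (by linarith) (by norm_num)]
    linarith
  have hlam_t : |lam| ≤ t := hMl.trans htM
  -- key algebraic identity, rewrite goal, then clear heavy context
  have hkey : σsq n z c - (z:ℝ)
        - (n:ℝ) ^ (-(1:ℝ)/3) * (z:ℝ) * (lam - (n:ℝ) ^ (-(2:ℝ)/3) * (c:ℝ))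
      = (t^3 - (c:ℝ)) * (Q - (z:ℝ)*P) - (t^3 - (c:ℝ)) * Q^2 - lam * z * c * s^4 := by
    rw [hσ n z c, ← hQdef, e1, e2, ← hsdef, ← ht3, hPval]
    have h1 : s^3 * t^3 = 1 := by
      have h : s^3 * t^3 = (s*t)^3 := by ring
      rw [h, hst]; ring
    linear_combination ((z:ℝ) + (z:ℝ)*lam*s) * h1
  rw [hkey, e1, ← hsdef]
  have htr : T * r ≤ t := hMtr.trans htM
  clear hkey hp hq hσ hz hc hN e1 e2 e4 einv hPdef hQdef hsdef htdef hxM hx0 ht3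
  clear p q σsq n hn N hM0 hM2 hMl hMtr htM M
  have hts : t * s = 1 := by rw [mul_comm]; exact hst
  have hlam1 : -1 ≤ lam * s := by
    have h1 : |lam| * s ≤ t * s := mul_le_mul_of_nonneg_right hlam_t hs0.le
    have h2 := mul_le_mul_of_nonneg_right (neg_abs_le lam) hs0.le
    have h3 : -|lam| * s = -(|lam| * s) := by ring
    rw [h3] at h2
    linarith
  have hlam2 : lam * s ≤ 1 := by
    have h1 : |lam| * s ≤ t * s := mul_le_mul_of_nonneg_right hlam_t hs0.le
    have h2 := mul_le_mul_of_nonneg_right (le_abs_self lam) hs0.le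
    linarith
  have hPfac : P = s^3 * (1 + lam * s) := by rw [hPval]; ring
  have hP0 : 0 ≤ P := by
    rw [hPfac]; exact mul_nonneg (pow_nonneg hs0.le 3) (by linarith)
  have hP1 : P ≤ 1 := by
    rw [hPfac]
    have h1 : s^3 * (1 + lam * s) ≤ s^3 * 2 :=
      mul_le_mul_of_nonneg_left (by linarith) (pow_nonneg hs0.le 3)
    have h2 : s^3 ≤ (1/2:ℝ)^3 := pow_le_pow_left₀ hs0.le hs12 3
    nlinarith
  have hz0 : (0:ℝ) ≤ (z:ℝ) := Nat.cast_nonneg z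
  have hc0 : (0:ℝ) ≤ (c:ℝ) := Nat.cast_nonneg c
  have hcx : (c:ℝ) ≤ t^3 := by nlinarith
  -- q bounds
  have hQ0 : 0 ≤ Q := by
    rw [hQval]
    have := pow_le_one₀ (by linarith : (0:ℝ) ≤ 1 - P) (by linarith : (1:ℝ) - P ≤ 1) (n := z)
    linarith
  have hQhigh : Q ≤ (z:ℝ) * P := by
    have h := one_add_mul_le_pow (a := -P) (by linarith) z
    have h' : (1 + -P : ℝ) = 1 - P := by ring
    rw [h'] at h
    rw [hQval]; nlinarith
  have hQlow : (z:ℝ) * P - ((z:ℝ) * P)^2 / 2 ≤ Q := by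
    have := quad_bound P hP0 hP1 z
    rw [hQval]; linarith
  -- zP bound
  have hzP0 : 0 ≤ (z:ℝ) * P := mul_nonneg hz0 hP0
  have hzP : (z:ℝ) * P ≤ 2 * r * s^2 := by
    have hP2 : P ≤ 2 * s^3 := by
      rw [hPfac]
      nlinarith [pow_nonneg hs0.le 3]
    calc (z:ℝ) * P ≤ (t * r) * (2 * s^3) := by nlinarith
      _ = 2 * r * s^2 * (s * t) := by ring
      _ = 2 * r * s^2 := by rw [hst]; ring
  have hts4 : t^3 * s^4 = s := by
    have h : t^3 * s^4 = (s*t)^3 * s := by ring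
    rw [h, hst]; ring
  -- bound the three error terms
  have hA : |(t^3 - (c:ℝ)) * (Q - (z:ℝ)*P)| ≤ 2 * r^2 * s := by
    rw [abs_le]
    constructor
    · have h1 : ((z:ℝ)*P)^2 ≤ (2*r*s^2)^2 := by nlinarith
      have h2 : (t^3 - (c:ℝ)) * (((z:ℝ)*P)^2/2) ≤ t^3 * ((2*r*s^2)^2/2) := by
        apply mul_le_mul (by linarith) (by linarith) (by positivity) (by positivity)
      have h3 : t^3 * ((2*r*s^2)^2/2) = 2*r^2*s * (s*t)^3 := by ring
      rw [hst] at h3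
      nlinarith [mul_nonneg (by linarith : (0:ℝ) ≤ t^3 - (c:ℝ)) (by linarith : (0:ℝ) ≤ ((z:ℝ)*P)^2/2 - ((z:ℝ)*P - Q))]
    · nlinarith [mul_nonneg (by linarith : (0:ℝ) ≤ t^3 - (c:ℝ)) (by linarith : (0:ℝ) ≤ (z:ℝ)*P - Q), mul_pos hr hs0, mul_pos (mul_pos hr hr) hs0]
  have hB : |(t^3 - (c:ℝ)) * Q^2| ≤ 4 * r^2 * s := by
    rw [abs_le]
    have hQ2 : Q^2 ≤ (2*r*s^2)^2 := by nlinarith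
    have h2 : (t^3 - (c:ℝ)) * Q^2 ≤ t^3 * (2*r*s^2)^2 := by
      apply mul_le_mul (by linarith) hQ2 (sq_nonneg Q) (by positivity)
    have h3 : t^3 * (2*r*s^2)^2 = 4*r^2*s * (s*t)^3 := by ring
    rw [hst] at h3
    constructor
    · nlinarith [mul_nonneg (by linarith : (0:ℝ) ≤ t^3 - (c:ℝ)) (sq_nonneg Q), mul_pos (mul_pos hr hr) hs0]
    · nlinarith
  have hC : |lam * z * c * s^4| ≤ |lam| * T * r^2 * s := by
    have h1 : |lam * z * c * s^4| = |lam| * ((z:ℝ) * (c:ℝ) * s^4) := by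
      rw [abs_mul, abs_mul, abs_mul]
      rw [abs_of_nonneg hz0, abs_of_nonneg hc0, abs_of_nonneg (by positivity : (0:ℝ) ≤ s^4)]
      ring
    rw [h1]
    have h2 : (z:ℝ) * (c:ℝ) * s^4 ≤ (t*r) * (t^2*T*r) * s^4 := by
      apply mul_le_mul_of_nonneg_right _ (by positivity)
      apply mul_le_mul hz' hc' hc0 (by positivity)
    have h3 : (t*r) * (t^2*T*r) * s^4 = T * r^2 * s * (s*t)^3 := by ring
    rw [hst, one_pow, mul_one] at h3
    have h4 : (z:ℝ) * (c:ℝ) * s^4 ≤ T * r^2 * s := h2.trans h3.le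
    calc |lam| * ((z:ℝ) * (c:ℝ) * s^4) ≤ |lam| * (T * r^2 * s) :=
          mul_le_mul_of_nonneg_left h4 (abs_nonneg lam)
      _ = |lam| * T * r^2 * s := by ring
  calc |(t^3 - (c:ℝ)) * (Q - (z:ℝ)*P) - (t^3 - (c:ℝ)) * Q^2 - lam * z * c * s^4|
      ≤ |(t^3 - (c:ℝ)) * (Q - (z:ℝ)*P) - (t^3 - (c:ℝ)) * Q^2| + |lam * z * c * s^4| :=
        abs_sub _ _
    _ ≤ |(t^3 - (c:ℝ)) * (Q - (z:ℝ)*P)| + |(t^3 - (c:ℝ)) * Q^2| + |lam * z * c * s^4| := by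
        have := abs_sub ((t^3 - (c:ℝ)) * (Q - (z:ℝ)*P)) ((t^3 - (c:ℝ)) * Q^2)
        linarith
    _ ≤ 2*r^2*s + 4*r^2*s + |lam| * T * r^2 * s := by linarith
    _ ≤ (2*r^2 + 4*r^2 + |lam| * T * r^2 + 1) * s := by nlinarith [mul_nonneg (abs_nonneg lam) (mul_nonneg hT.le (sq_nonneg r))]
end

section
/- There exist a constant K > 0 and N ∈ ℕ such that for all n ≥ N and all pairs (z,c) ∈ Ω_n (i.e. z,c ∈ ℕ with z ≤ n^{1/3} r and c ≤ n^{2/3} T r), one has κ(n,z,c) ≤ K n^{2/3}, where κ(n,z,c) is the fourth moment of β(n,z,c) − z. (Lemma 3.1, fourth-moment bound.) -/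
open scoped BigOperators

open Finset


lemma castD2 (j : ℕ) : ((j.descFactorial 2 : ℕ) : ℝ) = j * (j - 1) := by
  cases j with
  | zero => simp
  | succ n =>
    rw [Nat.succ_descFactorial_succ, Nat.descFactorial_one]
    push_cast; ring

lemma castD3 (j : ℕ) : ((j.descFactorial 3 : ℕ) : ℝ) = j * (j - 1) * (j - 2) := by
  cases j with
  | zero => simp
  | succ n =>
    rw [Nat.succ_descFactorial_succ]
    push_cast [castD2]; ring

lemma castD4 (j : ℕ) : ((j.descFactorial 4 : ℕ) : ℝ) = j * (j - 1) * (j - 2) * (j - 3) := by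
  cases j with
  | zero => simp
  | succ n =>
    rw [Nat.succ_descFactorial_succ]
    push_cast [castD3]; ring

lemma descMoment (m k : ℕ) (q : ℝ) :
    ∑ j ∈ Finset.range (m + 1),
      (m.choose j : ℝ) * q ^ j * (1 - q) ^ (m - j) * (j.descFactorial k : ℝ)
      = (m.descFactorial k : ℝ) * q ^ k := by
  rcases le_or_gt k m with hkm | hkm
  · have hm : m + 1 = k + (m - k + 1) := by omega
    rw [hm, Finset.sum_range_add]
    have h0 : ∑ j ∈ Finset.range k,
        (m.choose j : ℝ) * q ^ j * (1 - q) ^ (m - j) * (j.descFactorial k : ℝ) = 0 := by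
      apply Finset.sum_eq_zero; intro j hj
      rw [Nat.descFactorial_eq_zero_iff_lt.2 (Finset.mem_range.1 hj)]
      simp
    rw [h0, zero_add]
    have key : ∀ i, i ≤ m - k →
        (m.choose (k + i) : ℝ) * ((k + i).descFactorial k : ℝ)
        = (m.descFactorial k : ℝ) * ((m - k).choose i : ℝ) := by
      intro i hi
      have h1 : m.choose (k + i) * (k + i).choose k = m.choose k * (m - k).choose i := by
        have := Nat.choose_mul (n := m) (Nat.le_add_right k i)
        simpa using this
      have h2 : m.choose (k + i) * (k + i).descFactorial k
          = m.descFactorial k * (m - k).choose i := by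
        rw [Nat.descFactorial_eq_factorial_mul_choose, Nat.descFactorial_eq_factorial_mul_choose]
        calc m.choose (k + i) * (Nat.factorial k * (k + i).choose k)
            = Nat.factorial k * (m.choose (k + i) * (k + i).choose k) := by ring
          _ = Nat.factorial k * (m.choose k * (m - k).choose i) := by rw [h1]
          _ = Nat.factorial k * m.choose k * (m - k).choose i := by ring
      exact_mod_cast h2
    have hterm : ∀ i ∈ Finset.range (m - k + 1),
        (m.choose (k + i) : ℝ) * q ^ (k + i) * (1 - q) ^ (m - (k + i)) * ((k + i).descFactorial k : ℝ)
        = (m.descFactorial k : ℝ) * q ^ k *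
          (q ^ i * (1 - q) ^ (m - k - i) * ((m - k).choose i : ℝ)) := by
      intro i hi
      have hi' : i ≤ m - k := by have := Finset.mem_range.1 hi; omega
      have hsub : m - (k + i) = m - k - i := by omega
      rw [pow_add, hsub]
      linear_combination (q ^ k * q ^ i * (1 - q) ^ (m - k - i)) * key i hi'
    rw [Finset.sum_congr rfl hterm, ← Finset.mul_sum]
    have hbin := add_pow q (1 - q) (m - k)
    have h1q : q + (1 - q) = 1 := by ring
    rw [h1q, one_pow] at hbin
    rw [← hbin, mul_one]
  · have h0 : ∀ j ∈ Finset.range (m + 1),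
        (m.choose j : ℝ) * q ^ j * (1 - q) ^ (m - j) * (j.descFactorial k : ℝ) = 0 := by
      intro j hj
      have hj' := Finset.mem_range.1 hj
      rw [Nat.descFactorial_eq_zero_iff_lt.2 (show j < k by omega)]
      simp
    rw [Finset.sum_eq_zero h0, Nat.descFactorial_eq_zero_iff_lt.2 hkm]
    simp

lemma momentPoly (m : ℕ) (q z : ℝ) :
    ∑ j ∈ Finset.range (m + 1),
      (m.choose j : ℝ) * q ^ j * (1 - q) ^ (m - j) * ((j : ℝ) - z) ^ 4
    = (m.descFactorial 4 : ℝ) * q ^ 4 + (6 - 4 * z) * (m.descFactorial 3 : ℝ) * q ^ 3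
      + (7 - 12 * z + 6 * z ^ 2) * (m.descFactorial 2 : ℝ) * q ^ 2
      + (1 - 4 * z + 6 * z ^ 2 - 4 * z ^ 3) * (m : ℝ) * q + z ^ 4 := by
  have h : ∀ j ∈ Finset.range (m + 1),
      (m.choose j : ℝ) * q ^ j * (1 - q) ^ (m - j) * ((j : ℝ) - z) ^ 4
      = (m.choose j : ℝ) * q ^ j * (1 - q) ^ (m - j) * (j.descFactorial 4 : ℝ)
        + (6 - 4 * z) * ((m.choose j : ℝ) * q ^ j * (1 - q) ^ (m - j) * (j.descFactorial 3 : ℝ))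
        + (7 - 12 * z + 6 * z ^ 2) *
            ((m.choose j : ℝ) * q ^ j * (1 - q) ^ (m - j) * (j.descFactorial 2 : ℝ))
        + (1 - 4 * z + 6 * z ^ 2 - 4 * z ^ 3) *
            ((m.choose j : ℝ) * q ^ j * (1 - q) ^ (m - j) * (j.descFactorial 1 : ℝ))
        + z ^ 4 * ((m.choose j : ℝ) * q ^ j * (1 - q) ^ (m - j) * (j.descFactorial 0 : ℝ)) := by
    intro j _
    rw [castD4, castD3, castD2, Nat.descFactorial_one, Nat.descFactorial_zero]
    push_cast
    ring
  rw [Finset.sum_congr rfl h]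
  simp only [Finset.sum_add_distrib, ← Finset.mul_sum]
  rw [descMoment m 4 q, descMoment m 3 q, descMoment m 2 q, descMoment m 1 q, descMoment m 0 q]
  simp [Nat.descFactorial_one, Nat.descFactorial_zero]
  ring

lemma prodLe (x y a D : ℝ) (h1 : -a ≤ x) (h2 : x ≤ a) (h3 : -D ≤ y) (h4 : y ≤ D) :
    x * y ≤ a * D := by
  nlinarith [mul_nonneg (by linarith : (0:ℝ) ≤ a - x) (by linarith : (0:ℝ) ≤ D + y),
    mul_nonneg (by linarith : (0:ℝ) ≤ a + x) (by linarith : (0:ℝ) ≤ D - y)]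

set_option maxHeartbeats 1000000 in
lemma centralBound (M q z X A D : ℝ) (hM : 0 ≤ M) (hq0 : 0 ≤ q) (hq1 : q ≤ 1)
    (hX : 1 ≤ X) (hA : 0 ≤ A) (hD : 0 ≤ D)
    (ha : M * q ≤ A * X) (hd1 : M * q - z ≤ D) (hd2 : z - M * q ≤ D) :
    M * (M - 1) * (M - 2) * (M - 3) * q ^ 4 + (6 - 4 * z) * (M * (M - 1) * (M - 2)) * q ^ 3
      + (7 - 12 * z + 6 * z ^ 2) * (M * (M - 1)) * q ^ 2
      + (1 - 4 * z + 6 * z ^ 2 - 4 * z ^ 3) * M * q + z ^ 4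
    ≤ (A + 3 * A ^ 2 + 4 * A * D + 6 * A * D ^ 2 + D ^ 4) * X ^ 2 := by
  have h1q : 0 ≤ 1 - q := by linarith
  have ha0 : 0 ≤ M * q := mul_nonneg hM hq0
  have hu0 : 0 ≤ M * q * (1 - q) := mul_nonneg ha0 h1q
  have hua : M * q * (1 - q) ≤ M * q := by nlinarith
  have hdD : (M * q - z) ^ 2 ≤ D ^ 2 := by nlinarith
  have ht1 : M * q * (1 - q) * (1 + 3 * (M - 2) * q * (1 - q)) ≤ M * q + 3 * (M * q) ^ 2 := by
    nlinarith [mul_nonneg hu0 (mul_nonneg hq0 h1q), mul_le_mul hua hua hu0 ha0]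
  have ht2 : 4 * (M * q * (1 - q) * (1 - 2 * q)) * (M * q - z) ≤ 4 * (M * q * D) := by
    have hx1 : M * q * (1 - q) * (1 - 2 * q) ≤ M * q := by nlinarith
    have hx2 : -(M * q) ≤ M * q * (1 - q) * (1 - 2 * q) := by nlinarith
    have := prodLe (M * q * (1 - q) * (1 - 2 * q)) (M * q - z) (M * q) D hx2 hx1
      (by linarith) (by linarith)
    linarith
  have ht3 : 6 * (M * q * (1 - q)) * (M * q - z) ^ 2 ≤ 6 * (M * q * D ^ 2) := by
    nlinarith [sq_nonneg (M * q - z), mul_le_mul hua hdD (sq_nonneg (M * q - z)) ha0]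
  have ht4 : (M * q - z) ^ 4 ≤ D ^ 4 := by nlinarith [sq_nonneg (M * q - z), sq_nonneg D]
  have hstep : M * q + 3 * (M * q) ^ 2 + 4 * (M * q * D) + 6 * (M * q * D ^ 2) + D ^ 4
      ≤ (A + 3 * A ^ 2 + 4 * A * D + 6 * A * D ^ 2 + D ^ 4) * X ^ 2 := by
    have hX0 : (0:ℝ) ≤ X := by linarith
    have hXX : X ≤ X ^ 2 := by nlinarith
    have hX2 : (1:ℝ) ≤ X ^ 2 := by nlinarith
    have haa : (M * q) ^ 2 ≤ (A * X) ^ 2 := by nlinarith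
    have h2 : M * q * D ≤ A * D * X ^ 2 := by
      have : M * q * D ≤ A * X * D := by nlinarith [mul_le_mul_of_nonneg_right ha hD]
      nlinarith [mul_le_mul_of_nonneg_left hXX (mul_nonneg hA hD)]
    have h3 : M * q * D ^ 2 ≤ A * D ^ 2 * X ^ 2 := by
      have : M * q * D ^ 2 ≤ A * X * D ^ 2 := by
        nlinarith [mul_le_mul_of_nonneg_right ha (sq_nonneg D)]
      nlinarith [mul_le_mul_of_nonneg_left hXX (mul_nonneg hA (sq_nonneg D))]
    have h1 : M * q ≤ A * X ^ 2 := by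
      nlinarith [mul_le_mul_of_nonneg_left hXX hA]
    have h4 : D ^ 4 ≤ D ^ 4 * X ^ 2 := by
      nlinarith [mul_le_mul_of_nonneg_left hX2 (pow_nonneg hD 4)]
    nlinarith [haa, sq_nonneg X]
  have hkey : M * (M - 1) * (M - 2) * (M - 3) * q ^ 4
      + (6 - 4 * z) * (M * (M - 1) * (M - 2)) * q ^ 3
      + (7 - 12 * z + 6 * z ^ 2) * (M * (M - 1)) * q ^ 2
      + (1 - 4 * z + 6 * z ^ 2 - 4 * z ^ 3) * M * q + z ^ 4
      = M * q * (1 - q) * (1 + 3 * (M - 2) * q * (1 - q))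
        + 4 * (M * q * (1 - q) * (1 - 2 * q)) * (M * q - z)
        + 6 * (M * q * (1 - q)) * (M * q - z) ^ 2 + (M * q - z) ^ 4 := by ring
  rw [hkey]
  linarith

lemma pow_one_sub_le_quad (p : ℝ) (hp0 : 0 ≤ p) (hp1 : p ≤ 1) (z : ℕ) :
    (1 - p) ^ z ≤ 1 - (z : ℝ) * p + (z : ℝ) ^ 2 * p ^ 2 / 2 := by
  induction z with
  | zero => simp
  | succ n ih =>
    have h1 : (0:ℝ) ≤ 1 - p := by linarith
    have h2 := mul_le_mul_of_nonneg_right ih h1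
    rw [pow_succ]
    push_cast
    nlinarith [sq_nonneg ((n : ℝ) * p), Nat.cast_nonneg (α := ℝ) n, sq_nonneg p,
      mul_nonneg (mul_nonneg (sq_nonneg ((n : ℝ))) (sq_nonneg p)) hp0]

lemma sq_mono_aux (a b : ℝ) (h0 : 0 ≤ a) (hab : a ≤ b) : a ^ 2 ≤ b ^ 2 := by nlinarith

lemma quad_aux (t : ℝ) (h0 : 0 ≤ t) (h1 : t ≤ 1) : 0 ≤ t - t ^ 2 / 2 := by nlinarith

lemma sq_le_94 (t : ℝ) (h1 : -(3/2) ≤ t) (h2 : t ≤ 3/2) : t ^ 2 ≤ 9/4 := by nlinarith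


set_option maxHeartbeats 1000000 in
/-- Lemma 3.1 (fourth-moment bound). With `p n = n⁻¹ + λ n^(-4/3)`,
`q n z = 1 - (1 - p n)^z`, and
`κ n z c = E[(β(n,z,c) - z)^4] = ∑_{j=0}^{n-c} C(n-c,j) q^j (1-q)^(n-c-j) (j - z)^4`
the fourth moment of `β(n,z,c) - z` for `β(n,z,c) ~ Bin(n-c, q n z)`, there exist `K > 0`
and `N` such that for all `n ≥ N` and all `(z, c) ∈ Ω_n` (i.e. `z ≤ n^(1/3) r` and
`c ≤ n^(2/3) T r`), `κ(n,z,c) ≤ K n^(2/3)`. -/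
theorem stmt_2 (lam r T : ℝ) (hr : 0 < r) (hT : 0 < T)
    (p : ℕ → ℝ) (hp : ∀ n : ℕ, p n = (n : ℝ)⁻¹ + lam * (n : ℝ) ^ (-(4 : ℝ) / 3))
    (q : ℕ → ℕ → ℝ) (hq : ∀ (n : ℕ) (z : ℕ), q n z = 1 - (1 - p n) ^ z)
    (κ : ℕ → ℕ → ℕ → ℝ)
    (hκ : ∀ (n : ℕ) (z c : ℕ), κ n z c =
      ∑ j ∈ Finset.range (n - c + 1),
        ((n - c).choose j : ℝ) * (q n z) ^ j * (1 - q n z) ^ (n - c - j)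
          * ((j : ℝ) - (z : ℝ)) ^ 4) :
    ∃ K : ℝ, 0 < K ∧ ∃ N : ℕ, ∀ n : ℕ, N ≤ n → ∀ z c : ℕ,
      (z : ℝ) ≤ (n : ℝ) ^ ((1 : ℝ) / 3) * r →
      (c : ℝ) ≤ (n : ℝ) ^ ((2 : ℝ) / 3) * T * r →
      κ n z c ≤ K * (n : ℝ) ^ ((2 : ℝ) / 3) := by
  set A : ℝ := 2 * r with hA_def
  set D : ℝ := |lam| * r + 2 * T * r ^ 2 + 2 * r ^ 2 + 1 with hD_def
  set K : ℝ := A + 3 * A ^ 2 + 4 * A * D + 6 * A * D ^ 2 + D ^ 4 with hK_def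
  have habs : 0 ≤ |lam| := abs_nonneg lam
  have hTr2 : 0 ≤ T * r ^ 2 := mul_nonneg hT.le (sq_nonneg r)
  have hlr : 0 ≤ |lam| * r := mul_nonneg habs hr.le
  have hD1 : 1 ≤ D := by rw [hD_def]; linarith [hlr, hTr2, sq_nonneg r]
  have hD0 : 0 ≤ D := by linarith
  have hA0 : 0 ≤ A := by rw [hA_def]; linarith
  have hApos : 0 < A := by rw [hA_def]; linarith
  have hK : 0 < K := by
    have h2 : 0 ≤ 3 * A ^ 2 := by positivity
    have h3 : 0 ≤ 4 * A * D := by positivity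
    have h4 : 0 ≤ 6 * A * D ^ 2 := by positivity
    have h5 : 0 ≤ D ^ 4 := by positivity
    rw [hK_def]; linarith
  refine ⟨K, hK, ?_⟩
  set B : ℝ := max 2 (max (2 * |lam|) (max (T * r) (2 * r))) with hB_def
  have hB2 : (2:ℝ) ≤ B := le_max_left _ _
  have hB0 : (0:ℝ) ≤ B := by linarith
  refine ⟨⌈B ^ 3⌉₊, ?_⟩
  intro n hn z c hz' hc'
  set X : ℝ := (n : ℝ) ^ ((1 : ℝ) / 3) with hX_def
  have hn0 : (0:ℝ) ≤ (n : ℝ) := Nat.cast_nonneg n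
  have hBn : B ^ 3 ≤ (n : ℝ) := le_trans (Nat.le_ceil _) (Nat.cast_le.2 hn)
  have hXB : B ≤ X := by
    have h1 : (B ^ 3) ^ ((1:ℝ)/3) ≤ X := by
      apply Real.rpow_le_rpow (by positivity) hBn (by norm_num)
    have h2 : ((B:ℝ) ^ (3:ℕ)) ^ ((1:ℝ)/3) = B := by
      rw [← Real.rpow_natCast B 3, ← Real.rpow_mul hB0]
      norm_num
    rwa [h2] at h1
  have hX2 : (2:ℝ) ≤ X := le_trans hB2 hXB
  have hX1 : (1:ℝ) ≤ X := by linarith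
  have hX0 : (0:ℝ) < X := by linarith
  have hX3 : X ^ 3 = (n : ℝ) := by
    rw [hX_def, ← Real.rpow_natCast ((n:ℝ) ^ ((1:ℝ)/3)) 3, ← Real.rpow_mul hn0]
    norm_num
  have hX30 : (0:ℝ) < X ^ 3 := pow_pos hX0 3
  have hX23 : (n : ℝ) ^ ((2:ℝ)/3) = X ^ 2 := by
    rw [hX_def, ← Real.rpow_natCast ((n:ℝ) ^ ((1:ℝ)/3)) 2, ← Real.rpow_mul hn0]
    norm_num
  have hX43 : (n : ℝ) ^ (-(4:ℝ)/3) = (X ^ 4)⁻¹ := by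
    rw [hX_def, ← Real.rpow_natCast ((n:ℝ) ^ ((1:ℝ)/3)) 4, ← Real.rpow_mul hn0,
      ← Real.rpow_neg hn0]
    norm_num
  have hlamX : 2 * |lam| ≤ X := le_trans (le_trans (le_max_left _ _) (le_max_right _ _)) hXB
  have hTrX : T * r ≤ X :=
    le_trans (le_trans (le_max_left _ _) (le_max_right _ _)) (le_trans (le_max_right _ _) hXB)
  have hrX : 2 * r ≤ X :=
    le_trans (le_trans (le_max_right _ _) (le_max_right _ _)) (le_trans (le_max_right _ _) hXB)
  set P : ℝ := p n with hP_def
  have hpP : P = (X ^ 3)⁻¹ + lam * (X ^ 4)⁻¹ := by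
    rw [hP_def, hp n, hX3, hX43]
  have hXPeq : X ^ 4 * P = X + lam := by
    rw [hpP]; field_simp
  have hXP_ub : X ^ 3 * P ≤ 3 / 2 := by
    have h2 : X ^ 4 * P ≤ X + X / 2 := by
      rw [hXPeq]; have := le_abs_self lam; linarith
    have h3 : X * (X ^ 3 * P) ≤ X * (3/2) := by
      have h4 : X * (X ^ 3 * P) = X ^ 4 * P := by ring
      linarith [h2, h4.le, h4.ge]
    exact le_of_mul_le_mul_left h3 hX0
  have hXP_lb : 1 / 2 ≤ X ^ 3 * P := by
    have h2 : X - X / 2 ≤ X ^ 4 * P := by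
      rw [hXPeq]; have := neg_abs_le lam; linarith
    have h3 : X * (1/2) ≤ X * (X ^ 3 * P) := by
      have h4 : X * (X ^ 3 * P) = X ^ 4 * P := by ring
      linarith [h2, h4.le, h4.ge]
    exact le_of_mul_le_mul_left h3 hX0
  have hP0 : 0 ≤ P := by
    by_contra h
    push_neg at h
    have h2 := mul_pos hX30 (neg_pos.2 h)
    have h3 : X ^ 3 * -P = -(X ^ 3 * P) := by ring
    linarith [h2, h3.le, h3.ge]
  have h8 : (8:ℝ) ≤ X ^ 3 := by
    have hq1 : (0:ℝ) ≤ X ^ 2 + 2 * X + 4 := by linarith [sq_nonneg X]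
    have h2 := mul_nonneg (sub_nonneg.2 hX2) hq1
    have h3 : (X - 2) * (X ^ 2 + 2 * X + 4) = X ^ 3 - 8 := by ring
    linarith [h2, h3.le, h3.ge]
  have hP1 : P ≤ 1 := by
    by_contra h
    push_neg at h
    have := mul_lt_mul_of_pos_left h hX30
    linarith
  set Q : ℝ := q n z with hQ_def
  have hQeq : Q = 1 - (1 - P) ^ z := by rw [hQ_def, hq n z, hP_def]
  have hz0 : (0:ℝ) ≤ (z : ℝ) := Nat.cast_nonneg z
  have hc0 : (0:ℝ) ≤ (c : ℝ) := Nat.cast_nonneg c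
  have hz : (z : ℝ) ≤ X * r := hz'
  have hc : (c : ℝ) ≤ X ^ 2 * T * r := by rw [hX23] at hc'; exact hc'
  have hQ0 : 0 ≤ Q := by
    rw [hQeq]
    have h1 : (1 - P) ^ z ≤ 1 := pow_le_one₀ (by linarith) (by linarith)
    linarith
  have hQ1 : Q ≤ 1 := by
    rw [hQeq]
    have h1 : 0 ≤ (1 - P) ^ z := pow_nonneg (by linarith) z
    linarith
  have hQub : Q ≤ (z : ℝ) * P := by
    have h1 := one_add_mul_le_pow (show (-2:ℝ) ≤ -P by linarith) z
    have h2 : (1 : ℝ) + (z : ℝ) * (-P) ≤ (1 - P) ^ z := by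
      rw [show (1:ℝ) + -P = 1 - P by ring] at h1; exact h1
    rw [hQeq]; linarith [h2]
  have hQlb : (z : ℝ) * P - (z : ℝ) ^ 2 * P ^ 2 / 2 ≤ Q := by
    have h1 := pow_one_sub_le_quad P hP0 hP1 z
    rw [hQeq]; linarith
  have hcn : c ≤ n := by
    have h1 : X ^ 2 * (T * r) ≤ X ^ 2 * X := mul_le_mul_of_nonneg_left hTrX (sq_nonneg X)
    have h2 : (c : ℝ) ≤ (n : ℝ) := by rw [← hX3]; linarith [hc, h1]
    exact_mod_cast h2
  set M : ℝ := ((n - c : ℕ) : ℝ) with hM_def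
  have hMcast : M = (n : ℝ) - (c : ℝ) := by rw [hM_def]; exact Nat.cast_sub hcn
  have hM0 : 0 ≤ M := Nat.cast_nonneg _
  have hM_le : M ≤ X ^ 3 := by rw [hMcast, hX3]; linarith
  have hzlam : (z:ℝ) * lam ≤ X * r * |lam| :=
    le_trans (mul_le_mul_of_nonneg_left (le_abs_self lam) hz0)
      (mul_le_mul_of_nonneg_right hz habs)
  have hzlam2 : -((z:ℝ) * lam) ≤ X * r * |lam| := by
    have h1 : (z:ℝ) * (-|lam|) ≤ (z:ℝ) * lam := mul_le_mul_of_nonneg_left (neg_abs_le lam) hz0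
    have h2 : (z:ℝ) * |lam| ≤ X * r * |lam| := mul_le_mul_of_nonneg_right hz habs
    linarith
  have hMQ_ub : M * Q ≤ X ^ 3 * ((z:ℝ) * P) := by
    have h1 : M * Q ≤ X ^ 3 * Q := mul_le_mul_of_nonneg_right hM_le hQ0
    have h2 : X ^ 3 * Q ≤ X ^ 3 * ((z:ℝ) * P) := mul_le_mul_of_nonneg_left hQub hX30.le
    linarith
  have ha : M * Q ≤ A * X := by
    have h1 : (z:ℝ) * (X ^ 3 * P) ≤ (z:ℝ) * (3/2) := mul_le_mul_of_nonneg_left hXP_ub hz0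
    have h2 : (3:ℝ)/2 * (z:ℝ) ≤ 3/2 * (X * r) := by linarith
    have h3 : 0 ≤ r * X := mul_nonneg hr.le hX0.le
    rw [hA_def]
    linarith [hMQ_ub, h1, h2, h3]
  have hrlamD : r * |lam| ≤ D := by
    rw [hD_def]; linarith [hTr2, sq_nonneg r]
  have hd1 : M * Q - (z:ℝ) ≤ D := by
    have h5 : (z:ℝ) * (X ^ 4 * P) = (z:ℝ) * X + (z:ℝ) * lam := by
      linear_combination (z:ℝ) * hXPeq
    have h6 : X * (M * Q) ≤ X * (X ^ 3 * ((z:ℝ) * P)) :=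
      mul_le_mul_of_nonneg_left hMQ_ub hX0.le
    have hkey : X * (M * Q - (z:ℝ)) ≤ X * (r * |lam|) := by linarith [h5, h6, hzlam]
    have := le_of_mul_le_mul_left hkey hX0
    linarith [hrlamD]
  have hX2r : (3:ℝ)/2 * r ≤ X ^ 2 := by
    linarith [mul_nonneg (sub_nonneg.2 hrX) hX0.le, mul_nonneg hr.le (sub_nonneg.2 hX2)]
  have hzP1 : (z:ℝ) * P ≤ 1 := by
    have h5 : (z:ℝ) * (X ^ 4 * P) = (z:ℝ) * X + (z:ℝ) * lam := by
      linear_combination (z:ℝ) * hXPeq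
    have hint1 : (z:ℝ) * X ≤ (X * r) * X := mul_le_mul_of_nonneg_right hz hX0.le
    have hint2 : X * r * |lam| ≤ X * r * (X / 2) :=
      mul_le_mul_of_nonneg_left (by linarith) (mul_nonneg hX0.le hr.le)
    have hint3 : (3:ℝ)/2 * r * X ^ 2 ≤ X ^ 4 := by
      linarith [mul_le_mul_of_nonneg_left hX2r (sq_nonneg X)]
    have hmain : X ^ 4 * ((z:ℝ) * P) ≤ X ^ 4 * 1 := by
      linarith [h5, hint1, hzlam, hint2, hint3]
    exact le_of_mul_le_mul_left hmain (pow_pos hX0 4)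
  have hS0 : 0 ≤ (z:ℝ) * P - (z:ℝ) ^ 2 * P ^ 2 / 2 := by
    have h1 := quad_aux ((z:ℝ) * P) (mul_nonneg hz0 hP0) hzP1
    have h2 : ((z:ℝ) * P) ^ 2 = (z:ℝ) ^ 2 * P ^ 2 := by ring
    linarith [h1, h2.le, h2.ge]
  have hd2 : (z:ℝ) - M * Q ≤ D := by
    have hMQ_lb : (X ^ 3 - (c:ℝ)) * ((z:ℝ) * P - (z:ℝ) ^ 2 * P ^ 2 / 2) ≤ M * Q := by
      have h1 : M = X ^ 3 - (c:ℝ) := by rw [hMcast, hX3]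
      rw [← h1]
      exact mul_le_mul_of_nonneg_left hQlb hM0
    have hX6P : X ^ 3 * (X ^ 3 * P) = X ^ 3 + X ^ 2 * lam := by
      linear_combination X ^ 2 * hXPeq
    have hE2 : (X ^ 3 * P) ^ 2 ≤ 9 / 4 := sq_le_94 _ (by linarith) hXP_ub
    have hz2 : (z:ℝ) ^ 2 ≤ (X * r) ^ 2 := sq_mono_aux _ _ hz0 hz
    have hb1 : X ^ 3 * (z:ℝ) - (z:ℝ) * (X ^ 3 * (X ^ 3 * P)) ≤ r * |lam| * X ^ 3 := by
      have h1 : X ^ 2 * (-((z:ℝ) * lam)) ≤ X ^ 2 * (X * r * |lam|) :=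
        mul_le_mul_of_nonneg_left hzlam2 (sq_nonneg X)
      have h0 : (z:ℝ) * (X ^ 3 * (X ^ 3 * P)) = (z:ℝ) * X ^ 3 + (z:ℝ) * (X ^ 2 * lam) := by
        linear_combination (z:ℝ) * hX6P
      linarith [h0, h1]
    have hb2 : (z:ℝ) ^ 2 * (X ^ 3 * P) ^ 2 / 2 ≤ 2 * r ^ 2 * X ^ 3 := by
      have h1 : (z:ℝ) ^ 2 * (X ^ 3 * P) ^ 2 ≤ (X * r) ^ 2 * (9/4) :=
        mul_le_mul hz2 hE2 (sq_nonneg _) (sq_nonneg _)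
      have h2 : 0 ≤ r ^ 2 * X ^ 2 * (2 * X - 9/8) :=
        mul_nonneg (mul_nonneg (sq_nonneg r) (sq_nonneg X)) (by linarith)
      have h3 : (X * r) ^ 2 * (9/4) = (9/4) * r ^ 2 * X ^ 2 := by ring
      have h4 : r ^ 2 * X ^ 2 * (2 * X - 9/8) = 2 * r ^ 2 * X ^ 3 - (9/8) * r ^ 2 * X ^ 2 := by
        ring
      linarith [h1, h2, h3.le, h3.ge, h4.le, h4.ge]
    have hb3 : (c:ℝ) * (z:ℝ) * (X ^ 3 * P) ≤ 2 * T * r ^ 2 * X ^ 3 := by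
      have hA1 : (c:ℝ) * (z:ℝ) ≤ (X ^ 2 * T * r) * (X * r) :=
        mul_le_mul hc hz hz0 (mul_nonneg (mul_nonneg (sq_nonneg X) hT.le) hr.le)
      have hA2 : (c:ℝ) * (z:ℝ) * (X ^ 3 * P) ≤ ((X ^ 2 * T * r) * (X * r)) * (X ^ 3 * P) :=
        mul_le_mul_of_nonneg_right hA1 (mul_nonneg hX30.le hP0)
      have hTrX3 : 0 ≤ X ^ 3 * (T * r ^ 2) := mul_nonneg hX30.le hTr2
      have hA3 : (X ^ 3 * (T * r ^ 2)) * (X ^ 3 * P) ≤ (X ^ 3 * (T * r ^ 2)) * (3/2) :=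
        mul_le_mul_of_nonneg_left hXP_ub hTrX3
      have h6 : (X ^ 2 * T * r) * (X * r) * (X ^ 3 * P)
          = (X ^ 3 * (T * r ^ 2)) * (X ^ 3 * P) := by ring
      linarith [hA2, hA3, hTrX3, h6.le, h6.ge]
    have hb4 : 0 ≤ (c:ℝ) * ((z:ℝ) ^ 2 * P ^ 2 / 2) * X ^ 3 :=
      mul_nonneg (mul_nonneg hc0 (by positivity)) hX30.le
    have t0 : X ^ 3 * ((z:ℝ) - M * Q)
        ≤ X ^ 3 * (z:ℝ) - X ^ 3 * ((X ^ 3 - (c:ℝ)) * ((z:ℝ) * P - (z:ℝ) ^ 2 * P ^ 2 / 2)) := by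
      linarith [mul_le_mul_of_nonneg_left hMQ_lb hX30.le]
    have texp : X ^ 3 * (z:ℝ) - X ^ 3 * ((X ^ 3 - (c:ℝ)) * ((z:ℝ) * P - (z:ℝ) ^ 2 * P ^ 2 / 2))
        = (X ^ 3 * (z:ℝ) - (z:ℝ) * (X ^ 3 * (X ^ 3 * P))) + (z:ℝ) ^ 2 * (X ^ 3 * P) ^ 2 / 2
          + (c:ℝ) * (z:ℝ) * (X ^ 3 * P) - (c:ℝ) * ((z:ℝ) ^ 2 * P ^ 2 / 2) * X ^ 3 := by
      ring
    have hsum : X ^ 3 * ((z:ℝ) - M * Q)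
        ≤ r * |lam| * X ^ 3 + 2 * r ^ 2 * X ^ 3 + 2 * T * r ^ 2 * X ^ 3 := by
      rw [texp] at t0
      linarith [t0, hb1, hb2, hb3, hb4]
    have hDge : r * |lam| + 2 * r ^ 2 + 2 * T * r ^ 2 ≤ D := by
      rw [hD_def]; linarith
    have hkey : X ^ 3 * ((z:ℝ) - M * Q) ≤ X ^ 3 * D := by
      have := mul_le_mul_of_nonneg_left hDge hX30.le
      linarith [hsum, this]
    have := le_of_mul_le_mul_left hkey hX30
    linarith
  have hfinal := centralBound M Q (z:ℝ) X A D hM0 hQ0 hQ1 hX1 hA0 hD0 ha hd1 hd2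
  calc κ n z c = (((n - c : ℕ)).descFactorial 4 : ℝ) * Q ^ 4
      + (6 - 4 * (z:ℝ)) * (((n - c : ℕ)).descFactorial 3 : ℝ) * Q ^ 3
      + (7 - 12 * (z:ℝ) + 6 * (z:ℝ) ^ 2) * (((n - c : ℕ)).descFactorial 2 : ℝ) * Q ^ 2
      + (1 - 4 * (z:ℝ) + 6 * (z:ℝ) ^ 2 - 4 * (z:ℝ) ^ 3) * M * Q + (z:ℝ) ^ 4 := by
        rw [hκ n z c, ← hQ_def, momentPoly (n - c) Q (z:ℝ), ← hM_def]
    _ = M * (M - 1) * (M - 2) * (M - 3) * Q ^ 4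
      + (6 - 4 * (z:ℝ)) * (M * (M - 1) * (M - 2)) * Q ^ 3
      + (7 - 12 * (z:ℝ) + 6 * (z:ℝ) ^ 2) * (M * (M - 1)) * Q ^ 2
      + (1 - 4 * (z:ℝ) + 6 * (z:ℝ) ^ 2 - 4 * (z:ℝ) ^ 3) * M * Q + (z:ℝ) ^ 4 := by
        rw [castD4, castD3, castD2, ← hM_def]
    _ ≤ K * X ^ 2 := by rw [hK_def]; exact hfinal
    _ = K * (n : ℝ) ^ ((2:ℝ)/3) := by rw [hX23]
end

section
/- There exist a constant K > 0 and N ∈ ℕ such that for all n ≥ N and all pairs (z,c) ∈ Ω_n (i.e. z,c ∈ ℕ with z ≤ n^{1/3} r and c ≤ n^{2/3} T r), one has both |μ(n,z,c) − z| ≤ K and |σ²(n,z,c) − z| ≤ K. (Lemma 3.1, 'in particular' bounds.) -/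
private lemma aux_pow_ub (pp : ℝ) (hp0 : 0 ≤ pp) (hp1 : pp ≤ 1) :
    ∀ z : ℕ, (1 - pp) ^ z ≤ 1 - (z : ℝ) * pp + (z : ℝ) ^ 2 * pp ^ 2 / 2 := by
  intro z
  induction z with
  | zero => simp
  | succ k ih =>
    have h1 : (0:ℝ) ≤ 1 - pp := by linarith
    have h3 : (1 - pp) ^ (k + 1) ≤ (1 - (k : ℝ) * pp + (k : ℝ) ^ 2 * pp ^ 2 / 2) * (1 - pp) := by
      rw [pow_succ]
      exact mul_le_mul_of_nonneg_right ih h1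
    have hk0 : (0:ℝ) ≤ (k : ℝ) := Nat.cast_nonneg k
    push_cast
    nlinarith [sq_nonneg pp, mul_nonneg (mul_nonneg (mul_nonneg hk0 hk0) (mul_nonneg hp0 hp0)) hp0]

/-- Lemma 3.1 ("in particular" bounds). With `p n = n⁻¹ + λ n^(-4/3)`,
`q n z = 1 - (1 - p n)^z`, mean `μ n z c = (n - c) * q n z` and variance
`σ² n z c = (n - c) * q n z * (1 - q n z)` of `Bin(n - c, q n z)`, there exist `K > 0`
and `N` such that for all `n ≥ N` and all `(z, c) ∈ Ω_n` (i.e. `z ≤ n^(1/3) r` and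
`c ≤ n^(2/3) T r`), both `|μ(n,z,c) - z| ≤ K` and `|σ²(n,z,c) - z| ≤ K`. -/
theorem stmt_3 (lam r T : ℝ) (hr : 0 < r) (hT : 0 < T)
    (p : ℕ → ℝ) (hp : ∀ n : ℕ, p n = (n : ℝ)⁻¹ + lam * (n : ℝ) ^ (-(4 : ℝ) / 3))
    (q : ℕ → ℕ → ℝ) (hq : ∀ (n : ℕ) (z : ℕ), q n z = 1 - (1 - p n) ^ z)
    (μ : ℕ → ℕ → ℕ → ℝ)
    (hμ : ∀ (n : ℕ) (z c : ℕ), μ n z c = ((n : ℝ) - (c : ℝ)) * q n z)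
    (σsq : ℕ → ℕ → ℕ → ℝ)
    (hσ : ∀ (n : ℕ) (z c : ℕ), σsq n z c = ((n : ℝ) - (c : ℝ)) * q n z * (1 - q n z)) :
    ∃ K : ℝ, 0 < K ∧ ∃ N : ℕ, ∀ n : ℕ, N ≤ n → ∀ z c : ℕ,
      (z : ℝ) ≤ (n : ℝ) ^ ((1 : ℝ) / 3) * r →
      (c : ℝ) ≤ (n : ℝ) ^ ((2 : ℝ) / 3) * T * r →
      |μ n z c - (z : ℝ)| ≤ K ∧ |σsq n z c - (z : ℝ)| ≤ K := by
  refine ⟨|lam| * r + 2 * r ^ 2 + 2 * T * r ^ 2 + 4 * r ^ 2 + 1, by positivity, ?_⟩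
  obtain ⟨N, hN⟩ := exists_nat_ge (max (max (|lam| ^ 3) ((T * r) ^ 3)) 2)
  refine ⟨N, fun n hn z c hz hc => ?_⟩
  set x : ℝ := (n : ℝ) with hxdef
  have hxN : (N : ℝ) ≤ x := Nat.cast_le.mpr hn
  have hx2 : (2 : ℝ) ≤ x := ((le_max_right _ _).trans hN).trans hxN
  have hlam3 : |lam| ^ 3 ≤ x := (((le_max_left _ _).trans (le_max_left _ _)).trans hN).trans hxN
  have hTr3 : (T * r) ^ 3 ≤ x := (((le_max_right _ _).trans (le_max_left _ _)).trans hN).trans hxN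
  have hx0 : (0 : ℝ) < x := by linarith
  set A : ℝ := x ^ ((1 : ℝ) / 3) with hAdef
  set P : ℝ := x ^ (-(4 : ℝ) / 3) with hPdef
  have hA0 : (0 : ℝ) < A := Real.rpow_pos_of_pos hx0 _
  have hP0 : (0 : ℝ) < P := Real.rpow_pos_of_pos hx0 _
  have hA3 : A * A * A = x := by
    rw [hAdef, ← Real.rpow_add hx0, ← Real.rpow_add hx0]
    norm_num
  have hB2 : x ^ ((2 : ℝ) / 3) = A * A := by
    rw [hAdef, ← Real.rpow_add hx0]
    norm_num
  have hAPx : A * P * x = 1 := by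
    rw [hAdef, hPdef, ← Real.rpow_add hx0]
    have h : (1 : ℝ) / 3 + -(4 : ℝ) / 3 = -1 := by norm_num
    rw [h, Real.rpow_neg_one]
    exact inv_mul_cancel₀ hx0.ne'
  set u : ℝ := x⁻¹ with hudef
  have hxu : x * u = 1 := mul_inv_cancel₀ hx0.ne'
  have hu0 : (0 : ℝ) ≤ u := by positivity
  have hpn : p n = u + lam * P := by rw [hp n]
  have hmu : μ n z c = (x - (c : ℝ)) * q n z := hμ n z c
  have hsig : σsq n z c = μ n z c - μ n z c * q n z := by
    rw [hσ n z c, hmu]; ring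
  clear_value x A P u
  -- basic consequences
  have hA3' : A ^ 3 = x := by rw [← hA3]; ring
  have hlamA : |lam| ≤ A := by
    have h := hlam3; rw [← hA3'] at h
    exact (pow_le_pow_iff_left₀ (abs_nonneg lam) hA0.le (by norm_num)).mp h
  have hTrA : T * r ≤ A := by
    have h := hTr3; rw [← hA3'] at h
    exact (pow_le_pow_iff_left₀ (by positivity) hA0.le (by norm_num)).mp h
  have hA1 : (1 : ℝ) ≤ A := by
    have h1 : (1 : ℝ) ^ 3 ≤ A ^ 3 := by rw [one_pow, hA3']; linarith
    exact (pow_le_pow_iff_left₀ (by norm_num) hA0.le (by norm_num)).mp h1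
  have h2u : 2 * u ≤ 1 := by
    have h1 : 2 * u ≤ x * u := mul_le_mul_of_nonneg_right hx2 hu0
    rw [hxu] at h1; exact h1
  have hAPu : A * P = u := by
    have h1 : A * P * x * u = u := by rw [hAPx]; ring
    rw [← h1, mul_assoc, hxu]; ring
  -- bounds on p n
  have habsP : |lam| * P ≤ u := by
    have h2 : |lam| * P ≤ A * P := mul_le_mul_of_nonneg_right hlamA hP0.le
    linarith [hAPu]
  have hlamP_ub : lam * P ≤ u := by
    have h1 : lam * P ≤ |lam| * P := mul_le_mul_of_nonneg_right (le_abs_self lam) hP0.le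
    linarith
  have hlamP_lb : -u ≤ lam * P := by
    have h1 : -|lam| * P ≤ lam * P := mul_le_mul_of_nonneg_right (neg_abs_le lam) hP0.le
    have h2 : -|lam| * P = -(|lam| * P) := by ring
    linarith
  have hp0 : 0 ≤ p n := by rw [hpn]; linarith
  have hp2u : p n ≤ 2 * u := by rw [hpn]; linarith
  have hp1 : p n ≤ 1 := by linarith
  -- bounds on q n z
  have hz0 : (0 : ℝ) ≤ (z : ℝ) := Nat.cast_nonneg z
  have hc0 : (0 : ℝ) ≤ (c : ℝ) := Nat.cast_nonneg c
  have hq0 : 0 ≤ q n z := by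
    rw [hq]
    have h := pow_le_one₀ (a := 1 - p n) (by linarith) (by linarith) (n := z)
    linarith
  have hqub : q n z ≤ (z : ℝ) * p n := by
    rw [hq]
    have h := one_add_mul_le_pow (a := -(p n)) (by linarith) z
    have h2 : 1 - (z : ℝ) * p n ≤ (1 - p n) ^ z := by
      calc 1 - (z : ℝ) * p n = 1 + (z : ℝ) * (-(p n)) := by ring
      _ ≤ (1 + -(p n)) ^ z := h
      _ = (1 - p n) ^ z := by ring_nf
    linarith
  have hqlb : (z : ℝ) * p n - (z : ℝ) ^ 2 * (p n) ^ 2 / 2 ≤ q n z := by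
    rw [hq]
    have h := aux_pow_ub (p n) hp0 hp1 z
    linarith
  have hzp0 : 0 ≤ (z : ℝ) * p n := mul_nonneg hz0 hp0
  -- geometric facts
  have hzA : (z : ℝ) ≤ A * r := hz
  have hcA : (c : ℝ) ≤ A * A * T * r := by rw [hB2] at hc; linarith
  have hcx : (c : ℝ) ≤ x := by
    have h1 : A * A * (T * r) ≤ A * A * A :=
      mul_le_mul_of_nonneg_left hTrA (by positivity)
    have h2 : A * A * T * r = A * A * (T * r) := by ring
    linarith [hA3]
  -- z * (x * P) ≤ r
  have hxPA : x * P = A⁻¹ := by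
    field_simp
    linear_combination hAPx
  have hw0 : 0 ≤ (z : ℝ) * (x * P) := by positivity
  have hwr : (z : ℝ) * (x * P) ≤ r := by
    rw [hxPA]
    have h1 : (z : ℝ) * A⁻¹ ≤ (A * r) * A⁻¹ :=
      mul_le_mul_of_nonneg_right hzA (inv_nonneg.2 hA0.le)
    have h2 : (A * r) * A⁻¹ = r := by field_simp
    linarith
  -- x * (z * p n) = z + lam * (z * (x*P))
  have hxzp : x * ((z : ℝ) * p n) = (z : ℝ) + lam * ((z : ℝ) * (x * P)) := by
    rw [hpn]
    have h : x * ((z : ℝ) * (u + lam * P)) = (z : ℝ) * (x * u) + lam * ((z : ℝ) * (x * P)) := by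
      ring
    rw [h, hxu, mul_one]
  have hlamw_ub : lam * ((z : ℝ) * (x * P)) ≤ |lam| * r := by
    have h1 : lam * ((z : ℝ) * (x * P)) ≤ |lam| * ((z : ℝ) * (x * P)) :=
      mul_le_mul_of_nonneg_right (le_abs_self lam) hw0
    have h2 : |lam| * ((z : ℝ) * (x * P)) ≤ |lam| * r :=
      mul_le_mul_of_nonneg_left hwr (abs_nonneg lam)
    linarith
  have hlamw_lb : -(|lam| * r) ≤ lam * ((z : ℝ) * (x * P)) := by
    have h1 : -|lam| * ((z : ℝ) * (x * P)) ≤ lam * ((z : ℝ) * (x * P)) :=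
      mul_le_mul_of_nonneg_right (neg_abs_le lam) hw0
    have h2 : |lam| * ((z : ℝ) * (x * P)) ≤ |lam| * r :=
      mul_le_mul_of_nonneg_left hwr (abs_nonneg lam)
    have h3 : -|lam| * ((z : ℝ) * (x * P)) = -(|lam| * ((z : ℝ) * (x * P))) := by ring
    linarith
  -- A*A*u ≤ 1, z*z*u ≤ r*r
  have hA2u : A * A * u ≤ 1 := by
    have h1 : A * A * u * A = 1 := by
      have h : A * A * u * A = (A * A * A) * u := by ring
      rw [h, hA3, hxu]
    have hs0 : 0 ≤ A * A * u := by positivity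
    have h2 : A * A * u * 1 ≤ A * A * u * A := mul_le_mul_of_nonneg_left hA1 hs0
    rw [mul_one] at h2
    linarith
  have hz2u : (z : ℝ) * (z : ℝ) * u ≤ r * r := by
    have h1 : (z : ℝ) * (z : ℝ) ≤ (A * r) * (A * r) :=
      mul_le_mul hzA hzA hz0 (by positivity)
    have h2 : (z : ℝ) * (z : ℝ) * u ≤ (A * r) * (A * r) * u :=
      mul_le_mul_of_nonneg_right h1 hu0
    have h3 : (A * r) * (A * r) * u = (r * r) * (A * A * u) := by ring
    have h4 : (r * r) * (A * A * u) ≤ (r * r) * 1 :=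
      mul_le_mul_of_nonneg_left hA2u (by positivity)
    rw [mul_one] at h4
    linarith
  have hrr : r * r = r ^ 2 := by ring
  -- x * z^2 * (p n)^2 ≤ 4 r^2
  have hxz2p2 : x * ((z : ℝ) ^ 2 * (p n) ^ 2) ≤ 4 * r ^ 2 := by
    have hp2 : (p n) ^ 2 ≤ (2 * u) ^ 2 := pow_le_pow_left₀ hp0 hp2u 2
    have h1 : x * ((z : ℝ) ^ 2 * (p n) ^ 2) ≤ x * ((z : ℝ) ^ 2 * (2 * u) ^ 2) := by
      apply mul_le_mul_of_nonneg_left _ hx0.le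
      exact mul_le_mul_of_nonneg_left hp2 (by positivity)
    have h2 : x * ((z : ℝ) ^ 2 * (2 * u) ^ 2) = 4 * ((x * u) * ((z : ℝ) * (z : ℝ) * u)) := by
      ring
    rw [h2, hxu, one_mul] at h1
    linarith
  -- c * (z * p n) ≤ 2 T r^2
  have hczp : (c : ℝ) * ((z : ℝ) * p n) ≤ 2 * T * r ^ 2 := by
    have hzpub : (z : ℝ) * p n ≤ (A * r) * (2 * u) := by
      calc (z : ℝ) * p n ≤ (A * r) * p n := mul_le_mul_of_nonneg_right hzA hp0
      _ ≤ (A * r) * (2 * u) := mul_le_mul_of_nonneg_left hp2u (by positivity)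
    have h1 : (c : ℝ) * ((z : ℝ) * p n) ≤ (A * A * T * r) * ((A * r) * (2 * u)) :=
      mul_le_mul hcA hzpub hzp0 (by positivity)
    have h2 : (A * A * T * r) * ((A * r) * (2 * u)) = 2 * T * r ^ 2 * ((A * A * A) * u) := by
      ring
    rw [h2, hA3, hxu, mul_one] at h1
    exact h1
  -- bounds on μ
  have hcq0 : 0 ≤ (c : ℝ) * q n z := mul_nonneg hc0 hq0
  have hmu_ub : μ n z c ≤ (z : ℝ) + |lam| * r := by
    rw [hmu]
    have h1 : (x - (c : ℝ)) * q n z = x * q n z - (c : ℝ) * q n z := by ring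
    have h2 : x * q n z ≤ x * ((z : ℝ) * p n) := mul_le_mul_of_nonneg_left hqub hx0.le
    rw [hxzp] at h2
    linarith
  have hmu_lb : (z : ℝ) - |lam| * r - 2 * r ^ 2 - 2 * T * r ^ 2 ≤ μ n z c := by
    rw [hmu]
    have h1 : x * ((z : ℝ) * p n - (z : ℝ) ^ 2 * (p n) ^ 2 / 2) ≤ x * q n z :=
      mul_le_mul_of_nonneg_left hqlb hx0.le
    have h2 : (c : ℝ) * q n z ≤ (c : ℝ) * ((z : ℝ) * p n) :=
      mul_le_mul_of_nonneg_left hqub hc0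
    have h3 : x * ((z : ℝ) * p n - (z : ℝ) ^ 2 * (p n) ^ 2 / 2)
        = x * ((z : ℝ) * p n) - x * ((z : ℝ) ^ 2 * (p n) ^ 2) / 2 := by ring
    rw [h3, hxzp] at h1
    have h4 : (x - (c : ℝ)) * q n z = x * q n z - (c : ℝ) * q n z := by ring
    rw [h4]
    linarith
  -- bounds on μ * q
  have hmq0 : 0 ≤ μ n z c * q n z := by
    rw [hmu]
    exact mul_nonneg (mul_nonneg (by linarith) hq0) hq0
  have hmq_ub : μ n z c * q n z ≤ 4 * r ^ 2 := by
    rw [hmu]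
    have h1 : (x - (c : ℝ)) * q n z * q n z = x * (q n z * q n z)
        - (c : ℝ) * q n z * q n z := by ring
    have h1' : 0 ≤ (c : ℝ) * q n z * q n z := mul_nonneg hcq0 hq0
    have h2a : q n z * q n z ≤ ((z : ℝ) * p n) * ((z : ℝ) * p n) :=
      mul_le_mul hqub hqub hq0 hzp0
    have h2 : x * (q n z * q n z) ≤ x * (((z : ℝ) * p n) * ((z : ℝ) * p n)) :=
      mul_le_mul_of_nonneg_left h2a hx0.le
    have h3 : x * (((z : ℝ) * p n) * ((z : ℝ) * p n)) = x * ((z : ℝ) ^ 2 * (p n) ^ 2) := by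
      ring
    rw [h3] at h2
    linarith
  -- conclude
  have k1 : 0 ≤ |lam| * r := by positivity
  have k2 : 0 ≤ r ^ 2 := sq_nonneg r
  have k3 : 0 ≤ T * r ^ 2 := by positivity
  constructor
  · rw [abs_le]
    constructor <;> linarith
  · rw [hsig, abs_le]
    constructor <;> linarith
end

section
/- There exist a constant K > 0 and N ∈ ℕ such that for all n ≥ N and all pairs (z,c) ∈ Ω_n^θ (i.e. z,c ∈ ℕ with z ≤ n^{1/3} θ_n² r and c ≤ n^{2/3} θ_n T r), one has |μ_θ(n,z,c) − z − n^{−1/3} z (λ θ_n − n^{−2/3} c)| ≤ K (θ_n⁴ n^{−1/3} + 1). (Lemma 6.1, mean expansion.) -/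
set_option maxHeartbeats 1000000

lemma aux_pow_one_sub_le (x : ℝ) (hx0 : 0 ≤ x) (hx1 : x ≤ 1) :
    ∀ z : ℕ, (1 - x) ^ z ≤ 1 - z * x + (z : ℝ) ^ 2 * x ^ 2 / 2 := by
  intro z
  induction z with
  | zero => simp
  | succ k ih =>
    have h1 : (0:ℝ) ≤ 1 - x := by linarith
    have h3 : (1 - x) ^ k * (1 - x) ≤ (1 - k * x + (k:ℝ)^2 * x^2 / 2) * (1 - x) :=
      mul_le_mul_of_nonneg_right ih h1
    have h2 : (1 - x) ^ (k+1) = (1 - x) ^ k * (1 - x) := pow_succ _ _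
    push_cast
    nlinarith [sq_nonneg ((k:ℝ) * x), mul_nonneg (mul_nonneg (sq_nonneg ((k:ℝ))) (sq_nonneg x)) hx0,
      mul_nonneg hx0 hx0]

/-- Lemma 6.1 (mean expansion). Let `θ n > 0`, `θ n → ∞`, `θ n = o(n^(1/3))`. With
`p n = n⁻¹ + λ θ n * n^(-4/3)`, `q n z = 1 - (1 - p n)^z` and mean
`μ n z c = (n - c) * q n z` of `Bin(n - c, q n z)`, there exist `K > 0` and `N` such
that for all `n ≥ N` and all `(z, c) ∈ Ω_n^θ` (i.e. `z ≤ n^(1/3) θ_n² r` and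
`c ≤ n^(2/3) θ_n T r`),
`|μ(n,z,c) - z - n^(-1/3) z (λ θ_n - n^(-2/3) c)| ≤ K (θ_n⁴ n^(-1/3) + 1)`. -/
theorem stmt_4 (lam r T : ℝ) (hr : 0 < r) (hT : 0 < T)
    (θ : ℕ → ℝ) (hθpos : ∀ n, 0 < θ n)
    (hθ_top : Filter.Tendsto θ Filter.atTop Filter.atTop)
    (hθ_small : Filter.Tendsto (fun n : ℕ => θ n * (n : ℝ) ^ (-(1 : ℝ) / 3))
      Filter.atTop (nhds 0))
    (p : ℕ → ℝ) (hp : ∀ n : ℕ, p n = (n : ℝ)⁻¹ + lam * θ n * (n : ℝ) ^ (-(4 : ℝ) / 3))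
    (q : ℕ → ℕ → ℝ) (hq : ∀ (n : ℕ) (z : ℕ), q n z = 1 - (1 - p n) ^ z)
    (μ : ℕ → ℕ → ℕ → ℝ)
    (hμ : ∀ (n : ℕ) (z c : ℕ), μ n z c = ((n : ℝ) - (c : ℝ)) * q n z) :
    ∃ K : ℝ, 0 < K ∧ ∃ N : ℕ, ∀ n : ℕ, N ≤ n → ∀ z c : ℕ,
      (z : ℝ) ≤ (n : ℝ) ^ ((1 : ℝ) / 3) * (θ n) ^ 2 * r →
      (c : ℝ) ≤ (n : ℝ) ^ ((2 : ℝ) / 3) * θ n * T * r →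
      |μ n z c - (z : ℝ)
          - (n : ℝ) ^ (-(1 : ℝ) / 3) * (z : ℝ)
            * (lam * θ n - (n : ℝ) ^ (-(2 : ℝ) / 3) * (c : ℝ))|
        ≤ K * ((θ n) ^ 4 * (n : ℝ) ^ (-(1 : ℝ) / 3) + 1) := by
  set ε : ℝ := min (1 / (2 * (|lam| + 1))) (1 / (T * r + 1)) with hεdef
  have hε : 0 < ε := by
    rw [hεdef]
    apply lt_min <;> positivity
  have hev : ∀ᶠ n in Filter.atTop, θ n * (n : ℝ) ^ (-(1 : ℝ) / 3) < ε :=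
    hθ_small.eventually_lt_const hε
  rw [Filter.eventually_atTop] at hev
  obtain ⟨N₁, hN₁⟩ := hev
  refine ⟨9/8 * r^2 + |lam| * T * r^2 + 1, by positivity, max N₁ 2, ?_⟩
  intro n hn z c hz hc
  have hn1 : N₁ ≤ n := le_trans (le_max_left _ _) hn
  have hn2 : 2 ≤ n := le_trans (le_max_right _ _) hn
  have hn0 : (0:ℝ) < n := by positivity
  have hn2' : (2:ℝ) ≤ (n:ℝ) := by exact_mod_cast hn2
  set a : ℝ := (n : ℝ) ^ ((1 : ℝ)/3) with hadef
  have ha : 0 < a := Real.rpow_pos_of_pos hn0 _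
  set b : ℝ := a⁻¹ with hbdef
  have hb : 0 < b := by positivity
  have hab : a * b = 1 := mul_inv_cancel₀ ha.ne'
  have key : ∀ k : ℕ, (n:ℝ) ^ ((k:ℝ)/3) = a ^ k := by
    intro k
    rw [hadef, show (k:ℝ)/3 = (1/3) * (k:ℝ) by ring, Real.rpow_mul hn0.le,
      Real.rpow_natCast]
  have h3 : a ^ 3 = (n:ℝ) := by
    have := key 3
    norm_num at this
    rw [← this]
  have hn23 : (n:ℝ) ^ ((2:ℝ)/3) = a ^ 2 := by
    have := key 2; norm_num at this; exact this
  have hm13 : (n:ℝ) ^ (-(1:ℝ)/3) = b := by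
    rw [neg_div, Real.rpow_neg hn0.le, hbdef, hadef]
  have hm23 : (n:ℝ) ^ (-(2:ℝ)/3) = b ^ 2 := by
    rw [neg_div, Real.rpow_neg hn0.le, hn23, hbdef, inv_pow]
  have hm43 : (n:ℝ) ^ (-(4:ℝ)/3) = b ^ 4 := by
    rw [neg_div, Real.rpow_neg hn0.le]
    have := key 4; norm_num at this
    rw [this, hbdef, inv_pow]
  have h33 : a ^ 3 * b ^ 3 = 1 := by
    rw [← mul_pow, hab, one_pow]
  have h34 : a ^ 3 * b ^ 4 = b := by
    rw [show a^3 * b^4 = (a^3*b^3)*b by ring, h33, one_mul]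
  have h56 : a ^ 5 * b ^ 6 = b := by
    have h55 : a ^ 5 * b ^ 5 = 1 := by rw [← mul_pow, hab, one_pow]
    rw [show a^5 * b^6 = (a^5*b^5)*b by ring, h55, one_mul]
  have hθn : 0 < θ n := hθpos n
  -- smallness
  have ht : θ n * b < ε := by
    have := hN₁ n hn1
    rwa [hm13] at this
  have htpos : 0 < θ n * b := by positivity
  -- p in terms of b
  have hinv : (n:ℝ)⁻¹ = b ^ 3 := by
    rw [← h3, hbdef, inv_pow]
  have hpn : p n = b ^ 3 + lam * θ n * b ^ 4 := by
    rw [hp n, hinv, hm43]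
  -- |lam| * t ≤ 1/2
  have hlt : |lam| * (θ n * b) ≤ 1/2 := by
    have h1 : θ n * b ≤ 1 / (2 * (|lam| + 1)) := le_trans ht.le (min_le_left _ _)
    have h2 : |lam| * (θ n * b) ≤ |lam| * (1 / (2 * (|lam| + 1))) :=
      mul_le_mul_of_nonneg_left h1 (abs_nonneg lam)
    have h3 : |lam| * (1 / (2 * (|lam| + 1))) ≤ 1/2 := by
      rw [mul_one_div, div_le_iff₀ (by positivity)]
      linarith [abs_nonneg lam]
    linarith
  have hlam1 : -(1/2) ≤ lam * (θ n * b) := by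
    have := neg_abs_le (lam * (θ n * b))
    rw [abs_mul, abs_of_nonneg htpos.le] at this
    linarith
  have hlam2 : lam * (θ n * b) ≤ 1/2 := by
    have := le_abs_self (lam * (θ n * b))
    rw [abs_mul, abs_of_nonneg htpos.le] at this
    linarith
  -- bounds on p
  have hb3pos : 0 < b ^ 3 := by positivity
  have hp_lb : 0 ≤ p n := by
    rw [hpn]
    have := mul_le_mul_of_nonneg_left hlam1 hb3pos.le
    linarith
  have hp_ub : p n ≤ 3/2 * b ^ 3 := by
    rw [hpn]
    have := mul_le_mul_of_nonneg_left hlam2 hb3pos.le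
    linarith
  have hb3 : b ^ 3 ≤ 1/2 := by
    have h33' : (n:ℝ) * b ^ 3 = 1 := by rw [← h3]; exact h33
    have := mul_le_mul_of_nonneg_right hn2' hb3pos.le
    linarith
  have hp1 : p n ≤ 1 := by linarith
  -- c ≤ a^3
  have hc0 : (0:ℝ) ≤ (c:ℝ) := Nat.cast_nonneg c
  have hz0 : (0:ℝ) ≤ (z:ℝ) := Nat.cast_nonneg z
  have hz' : (z:ℝ) ≤ a * (θ n)^2 * r := hz
  have hc' : (c:ℝ) ≤ a^2 * θ n * T * r := by rwa [hn23] at hc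
  have htTr : θ n * b * (T * r) < 1 := by
    have h1 : θ n * b ≤ 1 / (T * r + 1) := le_trans ht.le (min_le_right _ _)
    have h2 : θ n * b * (T * r) ≤ 1 / (T * r + 1) * (T * r) :=
      mul_le_mul_of_nonneg_right h1 (by positivity)
    have h3 : 1 / (T * r + 1) * (T * r) < 1 := by
      rw [one_div, inv_mul_lt_iff₀ (by positivity)]
      linarith [mul_pos hT hr]
    linarith
  have hcle : (c:ℝ) ≤ a ^ 3 := by
    have hmul := mul_le_mul_of_nonneg_left htTr.le (le_of_lt (pow_pos ha 3))
    have he : a^3 * (θ n * b * (T * r)) = (a*b) * (a^2 * θ n * T * r) := by ring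
    rw [he, hab, one_mul] at hmul
    linarith
  -- Bernoulli bounds
  have hber1 : 1 - (z:ℝ) * p n ≤ (1 - p n) ^ z := by
    have := one_add_mul_le_pow (show (-2:ℝ) ≤ -(p n) by linarith) z
    have e : 1 + (z:ℝ) * -(p n) = 1 - (z:ℝ) * p n := by ring
    have e2 : 1 + -(p n) = 1 - p n := by ring
    rw [e, e2] at this
    exact this
  have hber2 : (1 - p n) ^ z ≤ 1 - (z:ℝ) * p n + (z:ℝ)^2 * (p n)^2 / 2 :=
    aux_pow_one_sub_le (p n) hp_lb hp1 z
  set Q : ℝ := (1 - p n) ^ z with hQdef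
  set D : ℝ := (1 - Q) - (z:ℝ) * p n with hDdef
  clear_value Q D
  have hD_le : D ≤ 0 := by rw [hDdef]; linarith
  have hD_ge : -((z:ℝ)^2 * (p n)^2 / 2) ≤ D := by rw [hDdef]; linarith
  -- rewrite goal
  rw [hμ n z c, hq n z, hm13, hm23, ← h3, ← hQdef]
  -- key identity
  have hid : (a^3 - (c:ℝ)) * (1 - Q) - (z:ℝ) - b * (z:ℝ) * (lam * θ n - b^2 * (c:ℝ))
      = (a^3 - (c:ℝ)) * D - lam * θ n * (z:ℝ) * (c:ℝ) * b^4 := by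
    rw [hDdef, hpn]
    linear_combination ((z:ℝ) + lam * θ n * (z:ℝ) * b) * ((a*b)^2 + a*b + 1) * hab
  rw [hid]
  -- bound term 1
  have hAC : (0:ℝ) ≤ a^3 - (c:ℝ) := by linarith
  have hX : |(a^3 - (c:ℝ)) * D| ≤ a^3 * ((z:ℝ)^2 * (p n)^2 / 2) := by
    rw [abs_le]
    constructor
    · have h1 := mul_le_mul_of_nonneg_left hD_ge hAC
      have h2 : (0:ℝ) ≤ (c:ℝ) * ((z:ℝ)^2 * (p n)^2 / 2) :=
        mul_nonneg hc0 (by positivity)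
      linarith [h1, h2]
    · have h1 : (a^3 - (c:ℝ)) * D ≤ 0 := mul_nonpos_of_nonneg_of_nonpos hAC hD_le
      have h2 : (0:ℝ) ≤ a^3 * ((z:ℝ)^2 * (p n)^2 / 2) := by positivity
      linarith
  have hz2 : (z:ℝ)^2 ≤ a^2 * (θ n)^4 * r^2 := by
    have := mul_self_le_mul_self hz0 hz'
    linarith [this]
  have hp2 : (p n)^2 ≤ 9/4 * b^6 := by
    have := mul_self_le_mul_self hp_lb hp_ub
    linarith [this]
  have hzp : (z:ℝ)^2 * (p n)^2 ≤ (a^2 * (θ n)^4 * r^2) * (9/4 * b^6) := by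
    have := mul_le_mul hz2 hp2 (sq_nonneg (p n)) (by positivity)
    linarith
  have ht1 : |(a^3 - (c:ℝ)) * D| ≤ 9/8 * r^2 * (θ n)^4 * b := by
    have h1 : a^3 * ((z:ℝ)^2 * (p n)^2 / 2) ≤ a^3 * ((a^2 * (θ n)^4 * r^2) * (9/4 * b^6) / 2) := by
      have := mul_le_mul_of_nonneg_left hzp (show (0:ℝ) ≤ a^3 by positivity)
      linarith
    have h2 : a^3 * ((a^2 * (θ n)^4 * r^2) * (9/4 * b^6) / 2)
        = 9/8 * r^2 * (θ n)^4 * (a^5 * b^6) := by ring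
    rw [h2, h56] at h1
    linarith [hX]
  -- bound term 2
  have hzc : (z:ℝ) * (c:ℝ) ≤ (a * (θ n)^2 * r) * (a^2 * θ n * T * r) :=
    mul_le_mul hz' hc' hc0 (by positivity)
  have ht2 : |lam * θ n * (z:ℝ) * (c:ℝ) * b^4| ≤ |lam| * T * r^2 * (θ n)^4 * b := by
    have habs : |lam * θ n * (z:ℝ) * (c:ℝ) * b^4| = |lam| * (θ n * ((z:ℝ)*(c:ℝ)) * b^4) := by
      rw [show lam * θ n * (z:ℝ) * (c:ℝ) * b^4 = lam * (θ n * ((z:ℝ)*(c:ℝ)) * b^4) by ring,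
        abs_mul, abs_of_nonneg (mul_nonneg (mul_nonneg hθn.le (mul_nonneg hz0 hc0))
          (by positivity : (0:ℝ) ≤ b^4))]
    rw [habs]
    have h1 := mul_le_mul_of_nonneg_left hzc
      (mul_nonneg hθn.le (by positivity : (0:ℝ) ≤ b^4))
    have h2 : θ n * b^4 * ((a * (θ n)^2 * r) * (a^2 * θ n * T * r))
        = T * r^2 * (θ n)^4 * (a^3 * b^4) := by ring
    rw [h2, h34] at h1
    have h3 : |lam| * (θ n * ((z:ℝ)*(c:ℝ)) * b^4) ≤ |lam| * (T * r^2 * (θ n)^4 * b) := by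
      apply mul_le_mul_of_nonneg_left _ (abs_nonneg lam)
      linarith
    linarith
  -- combine
  have htri : |(a^3 - (c:ℝ)) * D - lam * θ n * (z:ℝ) * (c:ℝ) * b^4|
      ≤ |(a^3 - (c:ℝ)) * D| + |lam * θ n * (z:ℝ) * (c:ℝ) * b^4| := abs_sub _ _
  have hθ4b : (0:ℝ) ≤ (θ n)^4 * b := by positivity
  have hlamTr : (0:ℝ) ≤ |lam| * T * r^2 := by positivity
  have hr2 : (0:ℝ) ≤ r^2 := sq_nonneg r
  linarith [htri, ht1, ht2, hθ4b, hlamTr, hr2]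
end

section
/- There exist a constant K > 0 and N ∈ ℕ such that for all n ≥ N and all pairs (z,c) ∈ Ω_n^θ (i.e. z,c ∈ ℕ with z ≤ n^{1/3} θ_n² r and c ≤ n^{2/3} θ_n T r), one has |σ²_θ(n,z,c) − z − n^{−1/3} z (λ θ_n − n^{−2/3} c)| ≤ K (θ_n⁴ n^{−1/3} + 1). (Lemma 6.1, variance expansion.) -/
set_option maxHeartbeats 800000

lemma aux_pow_le (x : ℝ) (hx0 : 0 ≤ x) (hx1 : x ≤ 1) (z : ℕ) :
    (1 - x) ^ z ≤ 1 - (z : ℝ) * x + (z : ℝ) ^ 2 * x ^ 2 / 2 := by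
  induction z with
  | zero => norm_num
  | succ k ih =>
    have h2 : (1 - x) ^ k * (1 - x) ≤ (1 - (k : ℝ) * x + (k : ℝ) ^ 2 * x ^ 2 / 2) * (1 - x) :=
      mul_le_mul_of_nonneg_right ih (by linarith)
    have h1 : (1 - x) ^ (k + 1) = (1 - x) ^ k * (1 - x) := pow_succ _ _
    push_cast
    nlinarith [sq_nonneg x, mul_nonneg (mul_nonneg (sq_nonneg (k : ℝ)) hx0) (sq_nonneg x)]

/-- Lemma 6.1 (variance expansion). -/
theorem stmt_5 (lam r T : ℝ) (hr : 0 < r) (hT : 0 < T)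
    (θ : ℕ → ℝ) (hθpos : ∀ n, 0 < θ n)
    (hθ_top : Filter.Tendsto θ Filter.atTop Filter.atTop)
    (hθ_small : Filter.Tendsto (fun n : ℕ => θ n * (n : ℝ) ^ (-(1 : ℝ) / 3))
      Filter.atTop (nhds 0))
    (p : ℕ → ℝ) (hp : ∀ n : ℕ, p n = (n : ℝ)⁻¹ + lam * θ n * (n : ℝ) ^ (-(4 : ℝ) / 3))
    (q : ℕ → ℕ → ℝ) (hq : ∀ (n : ℕ) (z : ℕ), q n z = 1 - (1 - p n) ^ z)
    (σsq : ℕ → ℕ → ℕ → ℝ)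
    (hσ : ∀ (n : ℕ) (z c : ℕ), σsq n z c = ((n : ℝ) - (c : ℝ)) * q n z * (1 - q n z)) :
    ∃ K : ℝ, 0 < K ∧ ∃ N : ℕ, ∀ n : ℕ, N ≤ n → ∀ z c : ℕ,
      (z : ℝ) ≤ (n : ℝ) ^ ((1 : ℝ) / 3) * (θ n) ^ 2 * r →
      (c : ℝ) ≤ (n : ℝ) ^ ((2 : ℝ) / 3) * θ n * T * r →
      |σsq n z c - (z : ℝ)
          - (n : ℝ) ^ (-(1 : ℝ) / 3) * (z : ℝ)
            * (lam * θ n - (n : ℝ) ^ (-(2 : ℝ) / 3) * (c : ℝ))|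
        ≤ K * ((θ n) ^ 4 * (n : ℝ) ^ (-(1 : ℝ) / 3) + 1) := by
  refine ⟨6 * r ^ 2 + |lam| * T * r ^ 2 + 1, by positivity, ?_⟩
  have hδ : (0 : ℝ) < 1 / (1 + |lam| + T * r) := by positivity
  have hev : ∀ᶠ n in Filter.atTop,
      θ n * (n : ℝ) ^ (-(1 : ℝ) / 3) < 1 / (1 + |lam| + T * r) :=
    hθ_small.eventually_lt_const hδ
  obtain ⟨N, hN⟩ := Filter.eventually_atTop.mp (hev.and (Filter.eventually_ge_atTop 2))
  refine ⟨N, fun n hn z c hz hc => ?_⟩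
  obtain ⟨hsmall, hn1⟩ := hN n hn
  have hθn := hθpos n
  have hx2 : (2 : ℝ) ≤ (n : ℝ) := by exact_mod_cast hn1
  have hx1 : (1 : ℝ) ≤ (n : ℝ) := by linarith
  have hx : (0 : ℝ) < (n : ℝ) := by linarith
  set u : ℝ := (n : ℝ) ^ ((1 : ℝ) / 3) with hudef
  have hu : 0 < u := Real.rpow_pos_of_pos hx _
  have hu1 : (1 : ℝ) ≤ u := Real.one_le_rpow hx1 (by norm_num)
  have hu3 : u ^ 3 = (n : ℝ) := by
    rw [hudef, ← Real.rpow_natCast ((n : ℝ) ^ ((1 : ℝ) / 3)) 3, ← Real.rpow_mul hx.le]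
    norm_num
  have h23 : (n : ℝ) ^ ((2 : ℝ) / 3) = u ^ 2 := by
    rw [hudef, ← Real.rpow_natCast ((n : ℝ) ^ ((1 : ℝ) / 3)) 2, ← Real.rpow_mul hx.le]
    norm_num
  have h43 : (n : ℝ) ^ ((4 : ℝ) / 3) = u ^ 4 := by
    rw [hudef, ← Real.rpow_natCast ((n : ℝ) ^ ((1 : ℝ) / 3)) 4, ← Real.rpow_mul hx.le]
    norm_num
  have hm13 : (n : ℝ) ^ (-(1 : ℝ) / 3) = u⁻¹ := by
    rw [neg_div, Real.rpow_neg hx.le, hudef]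
  have hm23 : (n : ℝ) ^ (-(2 : ℝ) / 3) = (u ^ 2)⁻¹ := by
    rw [neg_div, Real.rpow_neg hx.le, h23]
  have hm43 : (n : ℝ) ^ (-(4 : ℝ) / 3) = (u ^ 4)⁻¹ := by
    rw [neg_div, Real.rpow_neg hx.le, h43]
  rw [hm13] at hsmall
  rw [hm13, hm23]
  rw [hudef] at hz
  rw [h23] at hc
  -- small quantities
  have hθu : θ n * u⁻¹ < 1 / (1 + |lam| + T * r) := hsmall
  have hθu0 : 0 < θ n * u⁻¹ := by positivity
  have habs : 0 ≤ |lam| := abs_nonneg lam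
  have hlam_le : |lam| ≤ 1 + |lam| + T * r := by nlinarith
  have hlθu : |lam| * (θ n * u⁻¹) ≤ 1 := by
    rcases eq_or_lt_of_le habs with h0 | h0
    · nlinarith
    · have := mul_lt_mul_of_pos_left hθu h0
      rw [mul_one_div] at this
      have h2 : |lam| / (1 + |lam| + T * r) ≤ 1 := by
        rw [div_le_one (by positivity)]; linarith
      linarith
  have hTrθu : T * r * (θ n * u⁻¹) ≤ 1 := by
    have := mul_lt_mul_of_pos_left hθu (by positivity : (0:ℝ) < T * r)
    rw [mul_one_div] at this
    have h2 : T * r / (1 + |lam| + T * r) ≤ 1 := by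
      rw [div_le_one (by positivity)]; linarith
    linarith
  -- p bounds
  have hpn : p n = (u ^ 3)⁻¹ + lam * θ n * (u ^ 4)⁻¹ := by rw [hp n, hm43, hu3]
  have hlam_bd : -(1:ℝ) ≤ lam * (θ n * u⁻¹) ∧ lam * (θ n * u⁻¹) ≤ 1 := by
    have h1 : lam * (θ n * u⁻¹) ≤ |lam| * (θ n * u⁻¹) :=
      mul_le_mul_of_nonneg_right (le_abs_self lam) hθu0.le
    have h2 : -|lam| * (θ n * u⁻¹) ≤ lam * (θ n * u⁻¹) :=
      mul_le_mul_of_nonneg_right (neg_abs_le lam) hθu0.le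
    rw [neg_mul] at h2
    exact ⟨by linarith, by linarith⟩
  have hu4 : u ^ 4 = u ^ 3 * u := by ring
  have hp0 : 0 ≤ p n := by
    rw [hpn]
    have : lam * θ n * (u ^ 4)⁻¹ = (lam * (θ n * u⁻¹)) * (u ^ 3)⁻¹ := by
      rw [hu4, mul_inv]; ring
    rw [this]
    have hv : (0:ℝ) < (u ^ 3)⁻¹ := inv_pos.mpr (pow_pos hu 3)
    have := mul_le_mul_of_nonneg_right hlam_bd.1 hv.le
    rw [neg_one_mul] at this
    linarith
  have hp2 : p n ≤ 2 * (u ^ 3)⁻¹ := by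
    rw [hpn]
    have : lam * θ n * (u ^ 4)⁻¹ = (lam * (θ n * u⁻¹)) * (u ^ 3)⁻¹ := by
      rw [hu4, mul_inv]; ring
    rw [this]
    have hv : (0:ℝ) < (u ^ 3)⁻¹ := inv_pos.mpr (pow_pos hu 3)
    have := mul_le_mul_of_nonneg_right hlam_bd.2 hv.le
    rw [one_mul] at this
    linarith
  have hu3_ge1 : (1:ℝ) ≤ u ^ 3 := one_le_pow₀ hu1
  have hp1 : p n ≤ 1 := by
    have hu3_ge2 : (2:ℝ) ≤ u ^ 3 := by rw [hu3]; exact hx2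
    have hvc : u ^ 3 * (u ^ 3)⁻¹ = 1 := mul_inv_cancel₀ (by positivity)
    have hv : (0:ℝ) < (u ^ 3)⁻¹ := inv_pos.mpr (pow_pos hu 3)
    nlinarith
  -- q bounds
  have hqub : q n z ≤ (z : ℝ) * p n := by
    rw [hq n z]
    have := one_add_mul_le_pow (a := -p n) (by linarith) z
    simp only [← sub_eq_add_neg, mul_neg] at this
    linarith
  have hqlb : (z : ℝ) * p n - (z : ℝ) ^ 2 * p n ^ 2 / 2 ≤ q n z := by
    rw [hq n z]
    have := aux_pow_le (p n) hp0 hp1 z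
    linarith
  have hq0 : 0 ≤ q n z := by
    rw [hq n z]
    have : (1 - p n) ^ z ≤ 1 := pow_le_one₀ (by linarith) (by linarith)
    linarith
  -- c small: c ≤ n
  have hc_le : (c : ℝ) ≤ u ^ 3 := by
    have : u ^ 2 * θ n * T * r = (T * r * (θ n * u⁻¹)) * u ^ 3 := by
      field_simp
    rw [this] at hc
    nlinarith [pow_pos hu 3]
  have hc0 : (0 : ℝ) ≤ (c : ℝ) := Nat.cast_nonneg c
  have hz0 : (0 : ℝ) ≤ (z : ℝ) := Nat.cast_nonneg z
  -- key algebraic identity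
  have hkey : σsq n z c - (z : ℝ) - u⁻¹ * (z : ℝ) * (lam * θ n - (u ^ 2)⁻¹ * (c : ℝ))
      = ((n : ℝ) - (c : ℝ)) * (q n z * (1 - q n z) - (z : ℝ) * p n)
        - lam * θ n * (z : ℝ) * (c : ℝ) * (u ^ 4)⁻¹ := by
    rw [hσ n z c, hpn, ← hu3]
    field_simp
    ring
  rw [hkey]
  have hune : u ≠ 0 := hu.ne'
  -- bound the two pieces
  have hzp0 : 0 ≤ (z : ℝ) * p n := mul_nonneg hz0 hp0
  have habs1 : |q n z * (1 - q n z) - (z : ℝ) * p n| ≤ 3 / 2 * ((z : ℝ) * p n) ^ 2 := by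
    have hexp : q n z * (1 - q n z) = q n z - q n z ^ 2 := by ring
    have hQ2 : q n z ^ 2 ≤ ((z : ℝ) * p n) ^ 2 := pow_le_pow_left₀ hq0 hqub 2
    have hzp2 : (z : ℝ) ^ 2 * p n ^ 2 = ((z : ℝ) * p n) ^ 2 := by ring
    rw [hzp2] at hqlb
    rw [abs_le, hexp]
    constructor
    · linarith
    · linarith [sq_nonneg (q n z), sq_nonneg ((z : ℝ) * p n)]
  have hnc : |(n : ℝ) - (c : ℝ)| ≤ u ^ 3 := by
    have h1 : (n : ℝ) = u ^ 3 := hu3.symm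
    have h2 : (0:ℝ) < u ^ 3 := pow_pos hu 3
    rw [abs_le]
    exact ⟨by linarith, by linarith⟩
  have hzp_bd : (z : ℝ) * p n ≤ 2 * r * θ n ^ 2 * (u ^ 2)⁻¹ := by
    have h1 : (z : ℝ) * p n ≤ (u * θ n ^ 2 * r) * (2 * (u ^ 3)⁻¹) := by
      apply mul_le_mul hz hp2 hp0 (by positivity)
    calc (z : ℝ) * p n ≤ (u * θ n ^ 2 * r) * (2 * (u ^ 3)⁻¹) := h1
      _ = 2 * r * θ n ^ 2 * (u ^ 2)⁻¹ := by field_simp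
  have hterm1 : |((n : ℝ) - (c : ℝ)) * (q n z * (1 - q n z) - (z : ℝ) * p n)|
      ≤ 6 * r ^ 2 * (θ n ^ 4 * u⁻¹) := by
    rw [abs_mul]
    calc |(n : ℝ) - (c : ℝ)| * |q n z * (1 - q n z) - (z : ℝ) * p n|
        ≤ u ^ 3 * (3 / 2 * ((z : ℝ) * p n) ^ 2) := by
          apply mul_le_mul hnc habs1 (abs_nonneg _) (by positivity)
      _ ≤ u ^ 3 * (3 / 2 * (2 * r * θ n ^ 2 * (u ^ 2)⁻¹) ^ 2) := by
          have h := pow_le_pow_left₀ hzp0 hzp_bd 2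
          exact mul_le_mul_of_nonneg_left (by linarith) (by positivity)
      _ = 6 * r ^ 2 * (θ n ^ 4 * u⁻¹) := by field_simp; ring
  have hterm2 : |lam * θ n * (z : ℝ) * (c : ℝ) * (u ^ 4)⁻¹|
      ≤ |lam| * T * r ^ 2 * (θ n ^ 4 * u⁻¹) := by
    have h1 : |lam * θ n * (z : ℝ) * (c : ℝ) * (u ^ 4)⁻¹|
        = |lam| * θ n * (z : ℝ) * (c : ℝ) * (u ^ 4)⁻¹ := by
      rw [abs_mul, abs_mul, abs_mul, abs_mul, abs_of_nonneg hθn.le, abs_of_nonneg hz0,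
        abs_of_nonneg hc0, abs_of_nonneg (by positivity : (0:ℝ) ≤ (u ^ 4)⁻¹)]
    rw [h1]
    have hzc : (z : ℝ) * (c : ℝ) ≤ (u * θ n ^ 2 * r) * (u ^ 2 * θ n * T * r) :=
      mul_le_mul hz hc hc0 (by positivity)
    have hrw : (u * θ n ^ 2 * r) * (u ^ 2 * θ n * T * r) * (|lam| * θ n * (u ^ 4)⁻¹)
        = |lam| * T * r ^ 2 * (θ n ^ 4 * u⁻¹) := by field_simp
    have h2 := mul_le_mul_of_nonneg_right hzc
      (by positivity : (0:ℝ) ≤ |lam| * θ n * (u ^ 4)⁻¹)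
    rw [hrw] at h2
    calc |lam| * θ n * (z : ℝ) * (c : ℝ) * (u ^ 4)⁻¹
        = (z : ℝ) * (c : ℝ) * (|lam| * θ n * (u ^ 4)⁻¹) := by ring
      _ ≤ |lam| * T * r ^ 2 * (θ n ^ 4 * u⁻¹) := h2
  have htot := abs_sub (((n : ℝ) - (c : ℝ)) * (q n z * (1 - q n z) - (z : ℝ) * p n))
    (lam * θ n * (z : ℝ) * (c : ℝ) * (u ^ 4)⁻¹)
  have hθu4 : 0 ≤ θ n ^ 4 * u⁻¹ := by positivity
  calc |((n : ℝ) - (c : ℝ)) * (q n z * (1 - q n z) - (z : ℝ) * p n)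
        - lam * θ n * (z : ℝ) * (c : ℝ) * (u ^ 4)⁻¹|
      ≤ |((n : ℝ) - (c : ℝ)) * (q n z * (1 - q n z) - (z : ℝ) * p n)|
        + |lam * θ n * (z : ℝ) * (c : ℝ) * (u ^ 4)⁻¹| := abs_sub _ _
    _ ≤ 6 * r ^ 2 * (θ n ^ 4 * u⁻¹) + |lam| * T * r ^ 2 * (θ n ^ 4 * u⁻¹) := by
        linarith
    _ = (6 * r ^ 2 + |lam| * T * r ^ 2) * (θ n ^ 4 * u⁻¹) := by ring
    _ ≤ (6 * r ^ 2 + |lam| * T * r ^ 2 + 1) * (θ n ^ 4 * u⁻¹ + 1) := by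
        have hB : (0:ℝ) ≤ 6 * r ^ 2 + |lam| * T * r ^ 2 := by positivity
        exact mul_le_mul (by linarith) (by linarith) hθu4 (by linarith)
  done
end

section
/- There exist a constant K > 0 and N ∈ ℕ such that for all n ≥ N and all pairs (z,c) ∈ Ω_n^θ (i.e. z,c ∈ ℕ with z ≤ n^{1/3} θ_n² r and c ≤ n^{2/3} θ_n T r), one has κ_θ(n,z,c) ≤ K (θ_n^{12} + θ_n^{8} n^{1/3} + θ_n^{4} n^{2/3}), where κ_θ(n,z,c) is the fourth moment of β_θ(n,z,c) − z. (Lemma 6.1, fourth-moment bound.) -/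
open scoped BigOperators

set_option maxHeartbeats 1000000

lemma df_step (i k : ℕ) : (((i+1).descFactorial (k+1) : ℕ) : ℝ)
    = (i.descFactorial (k+1) : ℝ) + (k+1) * (i.descFactorial k : ℝ) := by
  rw [Nat.succ_descFactorial_succ, Nat.descFactorial_succ]
  rcases le_or_gt k i with h | h
  · push_cast [Nat.cast_sub h]; ring
  · rw [Nat.descFactorial_of_lt h]; push_cast; ring

lemma fact_moment : ∀ (m k : ℕ) (x y : ℝ),
    ∑ j ∈ Finset.range (m+1), (m.choose j : ℝ) * (j.descFactorial k : ℝ) * x^j * y^(m-j)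
    = (m.descFactorial k : ℝ) * x^k * (x+y)^(m-k) := by
  intro m
  induction m with
  | zero =>
    intro k x y
    cases k with
    | zero => simp
    | succ k => simp
  | succ m ih =>
    intro k x y
    cases k with
    | zero =>
      simp only [Nat.descFactorial_zero, Nat.cast_one, mul_one, one_mul, Nat.zero_sub,
        Nat.sub_zero, pow_zero]
      rw [add_pow]
      apply Finset.sum_congr rfl
      intro j hj; ring
    | succ k =>
      rw [Finset.sum_range_succ']
      have hsplit : ∀ i ∈ Finset.range (m+1),
          ((m+1).choose (i+1) : ℝ) * ((i+1).descFactorial (k+1) : ℝ) * x^(i+1) * y^(m+1-(i+1))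
          = (m.choose i : ℝ) * ((i.descFactorial (k+1) : ℝ) + (k+1) * (i.descFactorial k : ℝ)) * x^(i+1) * y^(m-i)
            + (m.choose (i+1) : ℝ) * ((i+1).descFactorial (k+1) : ℝ) * x^(i+1) * y^(m-i) := by
        intro i hi
        rw [Nat.succ_sub_succ, Nat.choose_succ_succ, df_step]
        push_cast
        ring
      rw [Finset.sum_congr rfl hsplit, Finset.sum_add_distrib]
      have hA : ∑ i ∈ Finset.range (m+1),
          (m.choose i : ℝ) * ((i.descFactorial (k+1) : ℝ) + (k+1) * (i.descFactorial k : ℝ)) * x^(i+1) * y^(m-i)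
          = x * ((m.descFactorial (k+1) : ℝ) * x^(k+1) * (x+y)^(m-(k+1)))
            + ((k:ℝ)+1) * x * ((m.descFactorial k : ℝ) * x^k * (x+y)^(m-k)) := by
        rw [← ih (k+1) x y, ← ih k x y, Finset.mul_sum, Finset.mul_sum, ← Finset.sum_add_distrib]
        apply Finset.sum_congr rfl
        intro i hi
        ring
      have hB : (∑ i ∈ Finset.range (m+1),
            (m.choose (i+1) : ℝ) * ((i+1).descFactorial (k+1) : ℝ) * x^(i+1) * y^(m-i))
            + ((m+1).choose 0 : ℝ) * ((0:ℕ).descFactorial (k+1) : ℝ) * x^0 * y^(m+1-0)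
          = y * ((m.descFactorial (k+1) : ℝ) * x^(k+1) * (x+y)^(m-(k+1))) := by
        rw [← ih (k+1) x y, Finset.mul_sum, Finset.sum_range_succ' (fun j =>
          y * ((m.choose j : ℝ) * (j.descFactorial (k+1) : ℝ) * x^j * y^(m-j))) m]
        simp only [Nat.zero_descFactorial_succ, Nat.cast_zero, Nat.choose_zero_right,
          Nat.cast_one, mul_zero, zero_mul, add_zero, pow_zero, Nat.sub_zero]
        rw [Finset.sum_range_succ]
        rw [Nat.choose_succ_self]
        simp only [Nat.cast_zero, zero_mul, add_zero, mul_zero]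
        apply Finset.sum_congr rfl
        intro i hi
        rw [Finset.mem_range] at hi
        rw [show m - i = (m - (i+1)) + 1 from by omega]
        ring
      rw [add_assoc, hA, hB]
      rcases lt_or_ge k m with hkm | hkm
      · rw [show m - k = (m - (k+1)) + 1 from by omega,
          show m + 1 - (k+1) = (m - (k+1)) + 1 from by omega,
          Nat.succ_descFactorial_succ, Nat.descFactorial_succ,
          Nat.cast_mul, Nat.cast_mul, Nat.cast_sub (le_of_lt hkm)]
        push_cast
        ring
      · rw [show m - (k+1) = 0 from by omega, show m - k = 0 from by omega,
          show m + 1 - (k+1) = 0 from by omega,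
          Nat.descFactorial_of_lt (by omega : m < k+1),
          Nat.succ_descFactorial_succ]
        have hb : ((k:ℝ)+1) * (m.descFactorial k : ℝ) = ((m:ℝ)+1) * (m.descFactorial k : ℝ) := by
          rcases eq_or_lt_of_le hkm with h | h
          · rw [h]
          · rw [Nat.descFactorial_of_lt h]; simp
        push_cast
        linear_combination x^(k+1) * hb


lemma fm_df2 (j : ℕ) : ((j.descFactorial 2 : ℕ) : ℝ) = (j:ℝ)*((j:ℝ)-1) := by
  rcases j with _ | j
  · simp
  · rw [Nat.succ_descFactorial_succ, Nat.descFactorial_one]; push_cast; ring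

lemma fm_df3 (j : ℕ) : ((j.descFactorial 3 : ℕ) : ℝ) = (j:ℝ)*((j:ℝ)-1)*((j:ℝ)-2) := by
  rcases j with _ | _ | j
  · simp
  · norm_num [Nat.descFactorial]
  · rw [Nat.succ_descFactorial_succ, Nat.succ_descFactorial_succ, Nat.descFactorial_one]
    push_cast; ring

lemma fm_df4 (j : ℕ) : ((j.descFactorial 4 : ℕ) : ℝ) = (j:ℝ)*((j:ℝ)-1)*((j:ℝ)-2)*((j:ℝ)-3) := by
  rcases j with _ | _ | _ | j
  · simp
  · norm_num [Nat.descFactorial]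
  · norm_num [Nat.descFactorial]
  · rw [Nat.succ_descFactorial_succ, Nat.succ_descFactorial_succ,
      Nat.succ_descFactorial_succ, Nat.descFactorial_one]
    push_cast; ring

lemma fm_pow_bound (p : ℝ) (hp0 : 0 ≤ p) (hp1 : p ≤ 1) :
    ∀ z : ℕ, (1-p)^z ≤ 1 - (z:ℝ)*p + ((z:ℝ)*p)^2/2 := by
  intro z
  induction z with
  | zero => norm_num
  | succ z ih =>
    have h1 : (1-p)^(z+1) = (1-p)*(1-p)^z := by ring
    have h2 : (1-p)*(1-p)^z ≤ (1-p)*(1 - (z:ℝ)*p + ((z:ℝ)*p)^2/2) :=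
      mul_le_mul_of_nonneg_left ih (by linarith)
    have hz0 : (0:ℝ) ≤ (z:ℝ) := Nat.cast_nonneg z
    have h3 : (1-p)*(1 - (z:ℝ)*p + ((z:ℝ)*p)^2/2)
        ≤ 1 - ((z:ℝ)+1)*p + (((z:ℝ)+1)*p)^2/2 := by nlinarith [sq_nonneg ((z:ℝ)*p), mul_nonneg hz0 hp0, mul_nonneg (mul_nonneg hz0 hz0) (mul_nonneg hp0 hp0)]
    push_cast
    calc (1-p)^(z+1) = (1-p)*(1-p)^z := h1
      _ ≤ _ := le_trans h2 h3




/-- Lemma 6.1 (fourth-moment bound). Let `θ n > 0`, `θ n → ∞`, `θ n = o(n^(1/3))`. With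
`p n = n⁻¹ + λ θ n * n^(-4/3)`, `q n z = 1 - (1 - p n)^z`, and
`κ n z c = E[(β_θ(n,z,c) - z)^4] = ∑_{j=0}^{n-c} C(n-c,j) q^j (1-q)^(n-c-j) (j - z)^4`
for `β_θ(n,z,c) ~ Bin(n-c, q n z)`, there exist `K > 0` and `N` such that for all
`n ≥ N` and all `(z, c) ∈ Ω_n^θ` (i.e. `z ≤ n^(1/3) θ_n² r` and `c ≤ n^(2/3) θ_n T r`),
`κ(n,z,c) ≤ K (θ_n^12 + θ_n^8 n^(1/3) + θ_n^4 n^(2/3))`. -/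
theorem stmt_6 (lam r T : ℝ) (hr : 0 < r) (hT : 0 < T)
    (θ : ℕ → ℝ) (hθpos : ∀ n, 0 < θ n)
    (hθ_top : Filter.Tendsto θ Filter.atTop Filter.atTop)
    (hθ_small : Filter.Tendsto (fun n : ℕ => θ n * (n : ℝ) ^ (-(1 : ℝ) / 3))
      Filter.atTop (nhds 0))
    (p : ℕ → ℝ) (hp : ∀ n : ℕ, p n = (n : ℝ)⁻¹ + lam * θ n * (n : ℝ) ^ (-(4 : ℝ) / 3))
    (q : ℕ → ℕ → ℝ) (hq : ∀ (n : ℕ) (z : ℕ), q n z = 1 - (1 - p n) ^ z)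
    (κ : ℕ → ℕ → ℕ → ℝ)
    (hκ : ∀ (n : ℕ) (z c : ℕ), κ n z c =
      ∑ j ∈ Finset.range (n - c + 1),
        ((n - c).choose j : ℝ) * (q n z) ^ j * (1 - q n z) ^ (n - c - j)
          * ((j : ℝ) - (z : ℝ)) ^ 4) :
    ∃ K : ℝ, 0 < K ∧ ∃ N : ℕ, ∀ n : ℕ, N ≤ n → ∀ z c : ℕ,
      (z : ℝ) ≤ (n : ℝ) ^ ((1 : ℝ) / 3) * (θ n) ^ 2 * r →
      (c : ℝ) ≤ (n : ℝ) ^ ((2 : ℝ) / 3) * θ n * T * r →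
      κ n z c ≤ K * ((θ n) ^ 12 + (θ n) ^ 8 * (n : ℝ) ^ ((1 : ℝ) / 3)
        + (θ n) ^ 4 * (n : ℝ) ^ ((2 : ℝ) / 3)) := by
  set C1 : ℝ := (abs lam)*r + 2*T*r^2 + 2*r^2 + 1 with hC1def
  have hC1 : 0 < C1 := by
    have := abs_nonneg lam
    have h1 : 0 < 2*T*r^2 := by positivity
    have h2 : 0 < 2*r^2 := by positivity
    have h3 : 0 ≤ (abs lam)*r := mul_nonneg (abs_nonneg lam) hr.le
    rw [hC1def]; linarith
  set K : ℝ := C1^4 + 54*r^3 + 14*r*C1^2 + 6*r*C1 + 2*r + 81*r^4 + 7*r^2 + 1 with hKdef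
  have hK : 0 < K := by
    have h1 : 0 < C1^4 := pow_pos hC1 4
    have h2 : 0 < 54*r^3 := by positivity
    have h3 : 0 < 14*r*C1^2 := by positivity
    have h4 : 0 < 6*r*C1 := by positivity
    have h5 : 0 < 2*r := by positivity
    have h6 : 0 < 81*r^4 := by positivity
    have h7 : 0 < 7*r^2 := by positivity
    rw [hKdef]; linarith
  refine ⟨K, hK, ?_⟩
  set δ : ℝ := min 1 (min (1/(2*((abs lam)+1))) (1/(2*(T*r+1)))) with hδdef
  have hδ0 : 0 < δ := by
    have := abs_nonneg lam
    have h2 : 0 < T*r := mul_pos hT hr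
    rw [hδdef]
    refine lt_min (by norm_num) (lt_min (by positivity) (by positivity))
  have hδ1 : δ ≤ 1 := min_le_left _ _
  have hδlam : (abs lam) * δ ≤ 1/2 := by
    have h1 : δ ≤ 1/(2*((abs lam)+1)) := le_trans (min_le_right _ _) (min_le_left _ _)
    have h0 := abs_nonneg lam
    have h2 : (abs lam) * δ ≤ (abs lam) * (1/(2*((abs lam)+1))) := mul_le_mul_of_nonneg_left h1 h0
    have h3 : (abs lam) * (1/(2*((abs lam)+1))) ≤ 1/2 := by
      rw [mul_one_div, div_le_div_iff₀ (by linarith) (by norm_num)]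
      linarith
    linarith
  have hδT : (T*r) * δ ≤ 1/2 := by
    have h1 : δ ≤ 1/(2*(T*r+1)) := le_trans (min_le_right _ _) (min_le_right _ _)
    have h0 : 0 < T*r := mul_pos hT hr
    have h2 : (T*r) * δ ≤ (T*r) * (1/(2*(T*r+1))) := mul_le_mul_of_nonneg_left h1 h0.le
    have h3 : (T*r) * (1/(2*(T*r+1))) ≤ 1/2 := by
      rw [mul_one_div, div_le_div_iff₀ (by linarith) (by norm_num)]
      linarith
    linarith
  obtain ⟨N1, hN1⟩ := Filter.eventually_atTop.mp (hθ_top.eventually_ge_atTop 1)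
  obtain ⟨N2, hN2⟩ := Metric.tendsto_atTop.mp hθ_small δ hδ0
  refine ⟨max (max N1 N2) 2, ?_⟩
  intro n hn z c hz hc
  have hn2 : 2 ≤ n := le_trans (le_max_right _ _) hn
  have ht1 : 1 ≤ θ n := hN1 n (le_trans (le_trans (le_max_left _ _) (le_max_left _ _)) hn)
  have hdist := hN2 n (le_trans (le_trans (le_max_right _ _) (le_max_left _ _)) hn)
  set t : ℝ := θ n with htdef
  have ht0 : (0:ℝ) ≤ t := by linarith
  have hn0 : (0:ℝ) < n := by exact_mod_cast (by omega : 0 < n)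
  have hn2' : (2:ℝ) ≤ n := by exact_mod_cast hn2
  set u : ℝ := (n:ℝ) ^ ((1:ℝ)/3) with hudef
  have hu0 : 0 < u := Real.rpow_pos_of_pos hn0 _
  have hu3 : u^3 = (n:ℝ) := by
    rw [hudef, ← Real.rpow_natCast ((n:ℝ) ^ ((1:ℝ)/3)) 3, ← Real.rpow_mul hn0.le]
    norm_num
  have hu1 : 1 ≤ u := by nlinarith [sq_nonneg (u-1), sq_nonneg (u+1)]
  set v : ℝ := u⁻¹ with hvdef
  have hv : u * v = 1 := mul_inv_cancel₀ hu0.ne'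
  have hv0 : 0 ≤ v := by rw [hvdef]; positivity
  have hn23 : (n:ℝ) ^ ((2:ℝ)/3) = u^2 := by
    rw [hudef, ← Real.rpow_natCast ((n:ℝ) ^ ((1:ℝ)/3)) 2, ← Real.rpow_mul hn0.le]
    norm_num
  have hn13 : (n:ℝ) ^ (-(1:ℝ)/3) = v := by
    rw [show (-(1:ℝ)/3) = -((1:ℝ)/3) by ring, Real.rpow_neg hn0.le, hvdef, hudef]
  have hn43 : (n:ℝ) ^ (-(4:ℝ)/3) = (u^4)⁻¹ := by
    rw [show (-(4:ℝ)/3) = -((4:ℝ)/3) by ring, Real.rpow_neg hn0.le]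
    congr 1
    rw [hudef, ← Real.rpow_natCast ((n:ℝ) ^ ((1:ℝ)/3)) 4, ← Real.rpow_mul hn0.le]
    norm_num
  -- ε-bound
  have htv0 : 0 ≤ t * v := mul_nonneg ht0 hv0
  have hεδ : t * v < δ := by
    rw [Real.dist_eq, sub_zero, hn13] at hdist
    rwa [abs_of_nonneg htv0] at hdist
  have htv1 : t * v ≤ 1 := le_trans hεδ.le hδ1
  have hεu : t < δ * u := by
    calc t = (t*v)*u := by rw [mul_assoc, mul_comm v u, hv, mul_one]
      _ < δ*u := mul_lt_mul_of_pos_right hεδ hu0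
  -- p facts
  have hnp : (n:ℝ) * p n = 1 + lam * (t * v) := by
    rw [hp n, hn43, ← hu3, hvdef]
    have hu5 : u^4 ≠ 0 := by positivity
    have hu6 : u^3 ≠ 0 := by positivity
    field_simp
    ring
  have hs2 : |lam * (t*v)| ≤ 1/2 := by
    rw [abs_mul, abs_of_nonneg htv0]
    calc (abs lam) * (t*v) ≤ (abs lam) * δ := mul_le_mul_of_nonneg_left hεδ.le (abs_nonneg lam)
      _ ≤ 1/2 := hδlam
  have hnp_ub : (n:ℝ) * p n ≤ 3/2 := by
    have := (abs_le.mp hs2).2; rw [hnp]; linarith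
  have hnp_lb : 1/2 ≤ (n:ℝ) * p n := by
    have := (abs_le.mp hs2).1; rw [hnp]; linarith
  have hp0 : 0 < p n := by
    by_contra h
    push_neg at h
    nlinarith [mul_nonpos_of_nonneg_of_nonpos hn0.le h]
  have hp1 : p n ≤ 1 := by
    nlinarith [mul_nonneg (show (0:ℝ) ≤ (n:ℝ) - 2 by linarith) hp0.le]
  -- c small
  rw [hn23] at hc
  have hcn : (c:ℝ) ≤ (n:ℝ)/2 := by
    have h2 : u^2*t*(T*r) ≤ u^2*(δ*u)*(T*r) :=
      mul_le_mul_of_nonneg_right (mul_le_mul_of_nonneg_left hεu.le (sq_nonneg u)) (mul_pos hT hr).le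
    have h4 : ((T*r)*δ)*u^3 ≤ (1/2)*u^3 := mul_le_mul_of_nonneg_right hδT (by positivity)
    calc (c:ℝ) ≤ u^2*t*T*r := hc
      _ = u^2*t*(T*r) := by ring
      _ ≤ u^2*(δ*u)*(T*r) := h2
      _ = ((T*r)*δ)*u^3 := by ring
      _ ≤ (1/2)*u^3 := h4
      _ = (n:ℝ)/2 := by rw [hu3]; ring
  have hcn' : c ≤ n := by
    have h : (c:ℝ) ≤ (n:ℝ) := le_trans hcn (by linarith)
    exact_mod_cast h
  -- binomial parameter facts
  obtain ⟨m, hm⟩ : ∃ m, n - c = m := ⟨_, rfl⟩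
  have hMeq : ((m:ℕ):ℝ) = (n:ℝ) - (c:ℝ) := by
    rw [← hm]; exact Nat.cast_sub hcn'
  set M : ℝ := (m:ℝ) with hMdef
  have hc0 : (0:ℝ) ≤ c := Nat.cast_nonneg c
  have hM2 : (n:ℝ)/2 ≤ M := by rw [hMeq]; linarith
  have hM1 : 1 ≤ M := by linarith
  have hM0 : 0 ≤ M := by linarith
  have hMn : M ≤ (n:ℝ) := by rw [hMeq]; linarith
  have hu32M : u^3 ≤ 2*M := by rw [hu3]; linarith
  have h1p0 : 0 ≤ 1 - p n := by linarith
  have h1p1 : 1 - p n ≤ 1 := by linarith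
  have hq0l : 0 ≤ q n z := by
    rw [hq n z]
    have := pow_le_one₀ h1p0 h1p1 (n := z)
    linarith
  have hq0u : q n z ≤ 1 := by
    rw [hq n z]
    have := pow_nonneg h1p0 z
    linarith
  have hqub : q n z ≤ (z:ℝ) * p n := by
    rw [hq n z]
    have h := one_add_mul_le_pow (show (-2:ℝ) ≤ -(p n) by linarith) z
    have h2 : (1 + -(p n))^z = (1 - p n)^z := by ring_nf
    rw [h2] at h
    linarith
  have hqlb : (z:ℝ)*p n - ((z:ℝ)*p n)^2/2 ≤ q n z := by
    rw [hq n z]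
    have := fm_pow_bound (p n) hp0.le hp1 z
    linarith
  -- bounds on a = M q
  have hz0' : (0:ℝ) ≤ z := Nat.cast_nonneg z
  have ha0 : 0 ≤ M * q n z := mul_nonneg hM0 hq0l
  have hzp0 : 0 ≤ (z:ℝ) * p n := mul_nonneg hz0' hp0.le
  have hanp : M * q n z ≤ (z:ℝ) * ((n:ℝ) * p n) :=
    calc M * q n z ≤ M * ((z:ℝ)*p n) := mul_le_mul_of_nonneg_left hqub hM0
      _ ≤ (n:ℝ) * ((z:ℝ)*p n) := mul_le_mul_of_nonneg_right hMn hzp0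
      _ = (z:ℝ)*((n:ℝ)*p n) := by ring
  have haub : M * q n z ≤ (3/2)*(z:ℝ) := by
    have h2 : (z:ℝ)*((n:ℝ)*p n) ≤ (z:ℝ)*(3/2) := mul_le_mul_of_nonneg_left hnp_ub hz0'
    linarith
  have hz3 : (z:ℝ)*(t*v) ≤ r*t^3 := by
    have w1 : (z:ℝ)*(t*v) ≤ (u*t^2*r)*(t*v) := mul_le_mul_of_nonneg_right hz htv0
    have w2 : (u*t^2*r)*(t*v) = r*t^3*(u*v) := by ring
    rw [w2, hv, mul_one] at w1
    exact w1
  have hztv0 : 0 ≤ (z:ℝ)*(t*v) := mul_nonneg hz0' htv0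
  have ht3 : (0:ℝ) ≤ t^3 := pow_nonneg ht0 3
  have hexpC1 : C1*t^3 = (abs lam)*(r*t^3) + 2*(T*(r^2*t^3)) + 2*(r^2*t^3) + t^3 := by
    rw [hC1def]; ring
  have h2TR : 0 ≤ T*(r^2*t^3) := mul_nonneg hT.le (mul_nonneg (sq_nonneg r) ht3)
  have hR2 : 0 ≤ r^2*t^3 := mul_nonneg (sq_nonneg r) ht3
  have hdub : M * q n z - (z:ℝ) ≤ C1*t^3 := by
    have h1 : (z:ℝ)*((n:ℝ)*p n) = (z:ℝ) + lam*((z:ℝ)*(t*v)) := by rw [hnp]; ring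
    have h2 : lam*((z:ℝ)*(t*v)) ≤ (abs lam)*((z:ℝ)*(t*v)) :=
      mul_le_mul_of_nonneg_right (le_abs_self lam) hztv0
    have h3 : (abs lam)*((z:ℝ)*(t*v)) ≤ (abs lam)*(r*t^3) :=
      mul_le_mul_of_nonneg_left hz3 (abs_nonneg lam)
    linarith
  have hpub : p n ≤ (3/2)*v^3 := by
    have hnv : (n:ℝ)*v^3 = 1 := by rw [← hu3, ← mul_pow, hv, one_pow]
    calc p n = p n * ((n:ℝ)*v^3) := by rw [hnv, mul_one]
      _ = ((n:ℝ)*p n)*v^3 := by ring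
      _ ≤ (3/2)*v^3 := mul_le_mul_of_nonneg_right hnp_ub (by positivity)
  have hutr0 : 0 ≤ u*t^2*r := mul_nonneg (mul_nonneg hu0.le (sq_nonneg t)) hr.le
  have hzp_ub : (z:ℝ)*p n ≤ (u*t^2*r)*((3/2)*v^3) := mul_le_mul hz hpub hp0.le hutr0
  have hczp : (c:ℝ)*((z:ℝ)*p n) ≤ 2*(T*(r^2*t^3)) := by
    have h0 : 0 ≤ u^2*t*T*r :=
      mul_nonneg (mul_nonneg (mul_nonneg (sq_nonneg u) ht0) hT.le) hr.le
    calc (c:ℝ)*((z:ℝ)*p n) ≤ (u^2*t*T*r)*((u*t^2*r)*((3/2)*v^3)) :=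
          mul_le_mul hc hzp_ub hzp0 h0
      _ = (3/2)*(T*(r^2*t^3))*((u*v)^3) := by ring
      _ = (3/2)*(T*(r^2*t^3)) := by rw [hv, one_pow, mul_one]
      _ ≤ 2*(T*(r^2*t^3)) := by linarith
  have hnzp2 : (n:ℝ)*((z:ℝ)*p n)^2/2 ≤ 2*(r^2*t^3) := by
    have hsq : ((z:ℝ)*p n)^2 ≤ ((u*t^2*r)*((3/2)*v^3))^2 := pow_le_pow_left₀ hzp0 hzp_ub 2
    have h5 : (n:ℝ)*(((z:ℝ)*p n)^2)/2 ≤ (n:ℝ)*((((u*t^2*r)*((3/2)*v^3))^2))/2 := by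
      have := mul_le_mul_of_nonneg_left hsq hn0.le
      linarith
    have h6 : (n:ℝ)*((((u*t^2*r)*((3/2)*v^3))^2))/2 = (9/8)*(r^2*t^3)*(t*v)*((u*v)^5) := by
      rw [← hu3]; ring
    have h7 : (9/8)*(r^2*t^3)*(t*v)*((u*v)^5) = (9/8)*(r^2*t^3)*(t*v) := by
      rw [hv, one_pow, mul_one]
    have h8 : (9/8)*(r^2*t^3)*(t*v) ≤ (9/8)*(r^2*t^3)*1 :=
      mul_le_mul_of_nonneg_left htv1 (by linarith)
    calc (n:ℝ)*((z:ℝ)*p n)^2/2 ≤ (n:ℝ)*((((u*t^2*r)*((3/2)*v^3))^2))/2 := h5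
      _ = (9/8)*(r^2*t^3)*(t*v) := by rw [h6, h7]
      _ ≤ (9/8)*(r^2*t^3)*1 := h8
      _ ≤ 2*(r^2*t^3) := by linarith
  have hdlb : -(C1*t^3) ≤ M * q n z - (z:ℝ) := by
    have s1 : M*((z:ℝ)*p n - ((z:ℝ)*p n)^2/2) ≤ M*q n z := mul_le_mul_of_nonneg_left hqlb hM0
    have s0 : M*((z:ℝ)*p n - ((z:ℝ)*p n)^2/2)
        = M*((z:ℝ)*p n) - M*(((z:ℝ)*p n)^2)/2 := by ring
    have s2 : M*((z:ℝ)*p n) = (n:ℝ)*((z:ℝ)*p n) - (c:ℝ)*((z:ℝ)*p n) := by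
      rw [hMeq]; ring
    have s3 : M*(((z:ℝ)*p n)^2)/2 ≤ (n:ℝ)*((z:ℝ)*p n)^2/2 := by
      have := mul_le_mul_of_nonneg_right hMn (sq_nonneg ((z:ℝ)*p n))
      linarith
    have s4 : (n:ℝ)*((z:ℝ)*p n) = (z:ℝ) + lam*((z:ℝ)*(t*v)) := by
      rw [show (n:ℝ)*((z:ℝ)*p n) = (z:ℝ)*((n:ℝ)*p n) by ring, hnp]; ring
    have s5 : -((abs lam)*(r*t^3)) ≤ lam*((z:ℝ)*(t*v)) := by
      have w := mul_le_mul_of_nonneg_right (neg_abs_le lam) hztv0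
      rw [neg_mul] at w
      have h3 : (abs lam)*((z:ℝ)*(t*v)) ≤ (abs lam)*(r*t^3) :=
        mul_le_mul_of_nonneg_left hz3 (abs_nonneg lam)
      linarith only [w, h3]
    linarith only [s1, s0, s2, s3, s4, s5, hczp, hnzp2, hexpC1, ht3]
  have hd : abs (M * q n z - (z:ℝ)) ≤ C1*t^3 := abs_le.mpr ⟨by linarith, hdub⟩
  clear_value C1 K δ t u v M
  -- moment identities
  have hS : ∀ k : ℕ, ∑ j ∈ Finset.range (m+1),
      (m.choose j : ℝ) * (j.descFactorial k : ℝ) * (q n z)^j * (1 - q n z)^(m-j)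
      = (m.descFactorial k : ℝ) * (q n z)^k := by
    intro k
    have h := fact_moment m k (q n z) (1 - q n z)
    rw [show q n z + (1 - q n z) = 1 from by ring, one_pow, mul_one] at h
    exact h
  have hexp : κ n z c
      = (m.descFactorial 4 : ℝ) * (q n z)^4
        + (6 - 4*(z:ℝ)) * ((m.descFactorial 3 : ℝ) * (q n z)^3)
        + (7 - 12*(z:ℝ) + 6*(z:ℝ)^2) * ((m.descFactorial 2 : ℝ) * (q n z)^2)
        + (1 - 4*(z:ℝ) + 6*(z:ℝ)^2 - 4*(z:ℝ)^3) * ((m.descFactorial 1 : ℝ) * (q n z)^1)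
        + (z:ℝ)^4 * ((m.descFactorial 0 : ℝ) * (q n z)^0) := by
    rw [hκ n z c, hm]
    rw [← hS 4, ← hS 3, ← hS 2, ← hS 1, ← hS 0]
    rw [Finset.mul_sum, Finset.mul_sum, Finset.mul_sum, Finset.mul_sum]
    rw [← Finset.sum_add_distrib, ← Finset.sum_add_distrib, ← Finset.sum_add_distrib,
      ← Finset.sum_add_distrib]
    apply Finset.sum_congr rfl
    intro j hj
    rw [fm_df4 j, fm_df3 j, fm_df2 j, Nat.descFactorial_one, Nat.descFactorial_zero]
    push_cast
    ring
  have hdfm4 : ((m.descFactorial 4 : ℕ):ℝ) = M*(M-1)*(M-2)*(M-3) := by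
    rw [fm_df4 m, hMdef]
  have hdfm3 : ((m.descFactorial 3 : ℕ):ℝ) = M*(M-1)*(M-2) := by
    rw [fm_df3 m, hMdef]
  have hdfm2 : ((m.descFactorial 2 : ℕ):ℝ) = M*(M-1) := by
    rw [fm_df2 m, hMdef]
  have hκM : κ n z c = M*(M-1)*(M-2)*(M-3)*(q n z)^4
      + (6 - 4*(z:ℝ)) * (M*(M-1)*(M-2)*(q n z)^3)
      + (7 - 12*(z:ℝ) + 6*(z:ℝ)^2) * (M*(M-1)*(q n z)^2)
      + (1 - 4*(z:ℝ) + 6*(z:ℝ)^2 - 4*(z:ℝ)^3) * (M*(q n z))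
      + (z:ℝ)^4 := by
    rw [hexp, hdfm4, hdfm3, hdfm2, Nat.descFactorial_one, Nat.descFactorial_zero, hMdef]
    push_cast
    ring
  -- correction terms nonneg
  have he2 : 0 ≤ M*(q n z)^2 := mul_nonneg hM0 (sq_nonneg _)
  have h3M : 0 ≤ 3*M^2 - 2*M := by
    have e : 3*M^2 - 2*M = M*(3*M-2) := by ring
    rw [e]; exact mul_nonneg hM0 (by linarith only [hM1])
  have he3 : 0 ≤ (3*M^2 - 2*M)*(q n z)^3 := mul_nonneg h3M (pow_nonneg hq0l 3)
  have he4 : 0 ≤ (6*M^3 - 11*M^2 + 6*M)*(q n z)^4 := by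
    have h1 : 0 ≤ M*(6*(M-1)^2 + M) := mul_nonneg hM0 (by linarith only [sq_nonneg (M-1), hM0])
    have h2 : 6*M^3 - 11*M^2 + 6*M = M*(6*(M-1)^2 + M) := by ring
    rw [h2]
    exact mul_nonneg h1 (pow_nonneg hq0l 4)
  have hstep1 : κ n z c ≤ (M*(q n z) - (z:ℝ))^4 + 6*(M*(q n z))*(M*(q n z) - (z:ℝ))^2
      + 4*(M*(q n z))*(M*(q n z) - (z:ℝ)) + 3*(M*(q n z))^2 + M*(q n z)
      + 4*(z:ℝ)*((3*M^2 - 2*M)*(q n z)^3) + 12*(z:ℝ)*(M*(q n z)^2) := by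
    have hid : M*(M-1)*(M-2)*(M-3)*(q n z)^4
        + (6 - 4*(z:ℝ)) * (M*(M-1)*(M-2)*(q n z)^3)
        + (7 - 12*(z:ℝ) + 6*(z:ℝ)^2) * (M*(M-1)*(q n z)^2)
        + (1 - 4*(z:ℝ) + 6*(z:ℝ)^2 - 4*(z:ℝ)^3) * (M*(q n z))
        + (z:ℝ)^4
        = (M*(q n z) - (z:ℝ))^4 + 6*(M*(q n z))*(M*(q n z) - (z:ℝ))^2
          + 4*(M*(q n z))*(M*(q n z) - (z:ℝ)) + 3*(M*(q n z))^2 + M*(q n z)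
          + 4*(z:ℝ)*((3*M^2 - 2*M)*(q n z)^3) + 12*(z:ℝ)*(M*(q n z)^2)
          - ((6*M^3 - 11*M^2 + 6*M)*(q n z)^4) - 6*((3*M^2 - 2*M)*(q n z)^3)
          - 7*(M*(q n z)^2) - 6*(z:ℝ)^2*(M*(q n z)^2) := by ring
    have hzq : 0 ≤ (z:ℝ)^2*(M*(q n z)^2) := mul_nonneg (sq_nonneg _) he2
    rw [hκM, hid]
    linarith only [he4, he3, he2, hzq]
  -- individual term bounds
  have haub2 : M*(q n z) ≤ (3/2)*(u*t^2*r) := by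
    have h := mul_le_mul_of_nonneg_left hz (by norm_num : (0:ℝ) ≤ 3/2)
    linarith only [haub, h]
  have hCt0 : 0 ≤ C1*t^3 := mul_nonneg hC1.le ht3
  have b1 : (M*(q n z) - (z:ℝ))^4 ≤ C1^4*t^12 := by
    calc (M*(q n z) - (z:ℝ))^4 ≤ |(M*(q n z) - (z:ℝ))^4| := le_abs_self _
      _ = |M*(q n z) - (z:ℝ)|^4 := abs_pow _ 4
      _ ≤ (C1*t^3)^4 := pow_le_pow_left₀ (abs_nonneg _) hd 4
      _ = C1^4*t^12 := by ring
  have hsq2 : (M*(q n z) - (z:ℝ))^2 ≤ (C1*t^3)^2 := by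
    calc (M*(q n z) - (z:ℝ))^2 = |M*(q n z) - (z:ℝ)|^2 := (sq_abs _).symm
      _ ≤ (C1*t^3)^2 := pow_le_pow_left₀ (abs_nonneg _) hd 2
  have b2 : 6*(M*(q n z))*(M*(q n z) - (z:ℝ))^2 ≤ 14*r*C1^2*(t^8*u) := by
    have h1 : (M*(q n z))*(M*(q n z) - (z:ℝ))^2 ≤ ((3/2)*(u*t^2*r))*((C1*t^3)^2) :=
      mul_le_mul haub2 hsq2 (sq_nonneg _) (by linarith only [hutr0])
    have h3 : 0 ≤ r*(C1^2*(t^8*u)) :=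
      mul_nonneg hr.le (mul_nonneg (sq_nonneg C1) (mul_nonneg (pow_nonneg ht0 8) hu0.le))
    linarith only [h1, h3]
  have b3 : 4*(M*(q n z))*(M*(q n z) - (z:ℝ)) ≤ 6*r*C1*(t^8*u) := by
    have h1 : (M*(q n z))*(M*(q n z) - (z:ℝ)) ≤ (M*(q n z))*(C1*t^3) :=
      mul_le_mul_of_nonneg_left hdub ha0
    have h2 : (M*(q n z))*(C1*t^3) ≤ ((3/2)*(u*t^2*r))*(C1*t^3) :=
      mul_le_mul_of_nonneg_right haub2 hCt0
    have h3 : t^5 ≤ t^8 := pow_le_pow_right₀ ht1 (by norm_num)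
    have h4 := mul_le_mul_of_nonneg_left h3
      (mul_nonneg (mul_nonneg hr.le hC1.le) hu0.le)
    linarith only [h1, h2, h4]
  have b4 : 3*(M*(q n z))^2 ≤ 7*r^2*(t^4*u^2) := by
    have h1 : (M*(q n z))^2 ≤ ((3/2)*(u*t^2*r))^2 := pow_le_pow_left₀ ha0 haub2 2
    have h2 : 0 ≤ r^2*(t^4*u^2) :=
      mul_nonneg (sq_nonneg r) (mul_nonneg (pow_nonneg ht0 4) (sq_nonneg u))
    linarith only [h1, h2]
  have b5 : M*(q n z) ≤ 2*r*(t^8*u) := by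
    have h3 : t^2 ≤ t^8 := pow_le_pow_right₀ ht1 (by norm_num)
    have h4 := mul_le_mul_of_nonneg_left h3 (mul_nonneg hr.le hu0.le)
    have h5 : 0 ≤ r*(t^8*u) := mul_nonneg hr.le (mul_nonneg (pow_nonneg ht0 8) hu0.le)
    linarith only [haub2, h4, h5]
  have hu3pos : (0:ℝ) < u^3 := pow_pos hu0 3
  have b6 : 4*(z:ℝ)*((3*M^2 - 2*M)*(q n z)^3) ≤ 81*r^4*(t^8*u) := by
    have key : ((3*M^2 - 2*M)*(q n z)^3)*u^3 ≤ 6*(M*(q n z))^3 := by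
      have k1 : ((3*M^2-2*M)*(q n z)^3)*u^3 ≤ ((3*M^2-2*M)*(q n z)^3)*(2*M) :=
        mul_le_mul_of_nonneg_left hu32M he3
      have k3 : 0 ≤ M^2*(q n z)^3 := mul_nonneg (sq_nonneg M) (pow_nonneg hq0l 3)
      linarith only [k1, k3]
    have hX : 0 ≤ ((3/2)*(u*t^2*r))^3 := pow_nonneg (by linarith only [hutr0]) 3
    have hmul : (4*(z:ℝ)*((3*M^2 - 2*M)*(q n z)^3))*u^3 ≤ (81*r^4*(t^8*u))*u^3 := by
      calc (4*(z:ℝ)*((3*M^2-2*M)*(q n z)^3))*u^3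
          = 4*(z:ℝ)*(((3*M^2-2*M)*(q n z)^3)*u^3) := by ring
        _ ≤ 4*(z:ℝ)*(6*(M*(q n z))^3) := mul_le_mul_of_nonneg_left key (by positivity)
        _ = 24*(z:ℝ)*(M*(q n z))^3 := by ring
        _ ≤ 24*(z:ℝ)*((3/2)*(u*t^2*r))^3 :=
            mul_le_mul_of_nonneg_left (pow_le_pow_left₀ ha0 haub2 3) (by positivity)
        _ ≤ 24*(u*t^2*r)*((3/2)*(u*t^2*r))^3 :=
            mul_le_mul_of_nonneg_right (by linarith only [hz]) hX
        _ = (81*r^4*(t^8*u))*u^3 := by ring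
    exact le_of_mul_le_mul_right hmul hu3pos
  have b7 : 12*(z:ℝ)*(M*(q n z)^2) ≤ 54*r^3*t^12 := by
    have key2 : (M*(q n z)^2)*u^3 ≤ 2*(M*(q n z))^2 := by
      have k1 : (M*(q n z)^2)*u^3 ≤ (M*(q n z)^2)*(2*M) :=
        mul_le_mul_of_nonneg_left hu32M he2
      linarith only [k1]
    have hX : 0 ≤ ((3/2)*(u*t^2*r))^2 := sq_nonneg _
    have hmul : (12*(z:ℝ)*(M*(q n z)^2))*u^3 ≤ (54*r^3*t^6)*u^3 := by
      calc (12*(z:ℝ)*(M*(q n z)^2))*u^3 = 6*(z:ℝ)*(2*((M*(q n z)^2)*u^3)) := by ring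
        _ ≤ 6*(z:ℝ)*(2*(2*(M*(q n z))^2)) := by
            have := mul_le_mul_of_nonneg_left key2 (show (0:ℝ) ≤ 2 by norm_num)
            exact mul_le_mul_of_nonneg_left this (by positivity)
        _ = 24*(z:ℝ)*(M*(q n z))^2 := by ring
        _ ≤ 24*(z:ℝ)*((3/2)*(u*t^2*r))^2 :=
            mul_le_mul_of_nonneg_left (pow_le_pow_left₀ ha0 haub2 2) (by positivity)
        _ ≤ 24*(u*t^2*r)*((3/2)*(u*t^2*r))^2 :=
            mul_le_mul_of_nonneg_right (by linarith only [hz]) hX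
        _ = (54*r^3*t^6)*u^3 := by ring
    have h6 : 12*(z:ℝ)*(M*(q n z)^2) ≤ 54*r^3*t^6 := le_of_mul_le_mul_right hmul hu3pos
    have h7 : t^6 ≤ t^12 := pow_le_pow_right₀ ht1 (by norm_num)
    have h8 := mul_le_mul_of_nonneg_left h7 (mul_nonneg (by norm_num : (0:ℝ) ≤ 54)
      (pow_nonneg hr.le 3))
    linarith only [h6, h8]
  -- assemble
  rw [hn23]
  have ht12 : 0 ≤ t^12 := pow_nonneg ht0 12
  have ht8u : 0 ≤ t^8*u := mul_nonneg (pow_nonneg ht0 8) hu0.le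
  have ht4u : 0 ≤ t^4*u^2 := mul_nonneg (pow_nonneg ht0 4) (sq_nonneg u)
  have k1 : 0 ≤ 14*r*C1^2 := mul_nonneg (mul_nonneg (by norm_num) hr.le) (sq_nonneg C1)
  have k2 : 0 ≤ 6*r*C1 := mul_nonneg (mul_nonneg (by norm_num) hr.le) hC1.le
  have k3 : 0 ≤ 2*r := by linarith
  have k4 : 0 ≤ 81*r^4 := by positivity
  have k5 : 0 ≤ 7*r^2 := by positivity
  have k6 : 0 ≤ 54*r^3 := by positivity
  have k7 : 0 ≤ C1^4 := by positivity
  have c1 : (C1^4 + 54*r^3)*t^12 ≤ K*t^12 :=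
    mul_le_mul_of_nonneg_right (by rw [hKdef]; linarith) ht12
  have c2 : (14*r*C1^2 + 6*r*C1 + 2*r + 81*r^4)*(t^8*u) ≤ K*(t^8*u) :=
    mul_le_mul_of_nonneg_right (by rw [hKdef]; linarith) ht8u
  have c3 : (7*r^2)*(t^4*u^2) ≤ K*(t^4*u^2) :=
    mul_le_mul_of_nonneg_right (by rw [hKdef]; linarith) ht4u
  linarith only [hstep1, b1, b2, b3, b4, b5, b6, b7, c1, c2, c3]
end

section
/- Define z(t) = f(c(t)) for t ≥ 0. Then z is continuous and nonnegative, c(t) = ∫₀^t z(s) ds for every t ≥ 0, and consequently z satisfies the deterministic Lamperti-type equation z(t) = f( ∫₀^t z(s) ds ) for all t ≥ 0, i.e. z(t) = x + λ ∫₀^t z(s) ds − (1/2)(∫₀^t z(s) ds)². (Explicit solution of the limit equation in Lemma 6.0 / equation (6.2).) -/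
/-- The real inverse hyperbolic tangent, `artanh y = (1/2) log((1+y)/(1-y))`. -/
noncomputable def Real.artanhLog (y : ℝ) : ℝ := (1 / 2) * Real.log ((1 + y) / (1 - y))

lemma tanh_artanh' (y : ℝ) (h1 : -1 < y) (h2 : y < 1) :
    Real.tanh (Real.artanhLog y) = y := by
  have hy1 : (0:ℝ) < 1 + y := by linarith
  have hy2 : (0:ℝ) < 1 - y := by linarith
  have hr : (0:ℝ) < (1 + y) / (1 - y) := div_pos hy1 hy2
  have hE2 : Real.exp (Real.artanhLog y) ^ 2 = (1 + y) / (1 - y) := by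
    rw [sq, ← Real.exp_add]
    have : Real.artanhLog y + Real.artanhLog y = Real.log ((1 + y) / (1 - y)) := by
      unfold Real.artanhLog; ring
    rw [this, Real.exp_log hr]
  have hEpos := Real.exp_pos (Real.artanhLog y)
  rw [Real.tanh_eq_sinh_div_cosh, Real.sinh_eq, Real.cosh_eq, Real.exp_neg]
  rw [div_eq_iff (by positivity)]
  have h := hE2
  field_simp at h ⊢
  nlinarith [h, hEpos]

lemma one_sub_tanh_sq (u : ℝ) : 1 - Real.tanh u ^ 2 = 1 / Real.cosh u ^ 2 := by
  have hc := Real.cosh_pos u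
  rw [Real.tanh_eq_sinh_div_cosh, div_pow]
  field_simp
  exact Real.cosh_sq_sub_sinh_sq u

lemma hasDerivAt_tanh' (u : ℝ) : HasDerivAt Real.tanh (1 / Real.cosh u ^ 2) u := by
  have hc := (Real.cosh_pos u).ne'
  have h := (Real.hasDerivAt_sinh u).div (Real.hasDerivAt_cosh u) hc
  have heq : (Real.cosh u * Real.cosh u - Real.sinh u * Real.sinh u) / Real.cosh u ^ 2
      = 1 / Real.cosh u ^ 2 := by
    have := Real.cosh_sq_sub_sinh_sq u
    rw [show Real.cosh u * Real.cosh u - Real.sinh u * Real.sinh u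
        = Real.cosh u ^ 2 - Real.sinh u ^ 2 by ring, this]
  rw [heq] at h
  exact h.congr_of_eventuallyEq <| by
    filter_upwards with v using Real.tanh_eq_sinh_div_cosh v

/-- Explicit solution of the limit equation in Lemma 6.0 / equation (6.2). With
`f u = x + λ u - u²/2`,
`c t = λ + √(2x+λ²) tanh(√(2x+λ²)/2 · t + artanh(-λ/√(2x+λ²)))` and `z t = f (c t)`:
`z` is continuous and nonnegative on `[0,∞)`, `c t = ∫₀^t z(s) ds` for all `t ≥ 0`,
and `z` satisfies the deterministic Lamperti-type equation
`z t = x + λ ∫₀^t z(s) ds - (1/2) (∫₀^t z(s) ds)²` for all `t ≥ 0`. -/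
theorem stmt_11 (x lam : ℝ) (hx : 0 < x)
    (f : ℝ → ℝ) (hf : ∀ u : ℝ, f u = x + lam * u - u ^ 2 / 2)
    (c : ℝ → ℝ)
    (hc : ∀ t : ℝ, c t = lam + Real.sqrt (2 * x + lam ^ 2) *
      Real.tanh (Real.sqrt (2 * x + lam ^ 2) / 2 * t
        + Real.artanhLog (-lam / Real.sqrt (2 * x + lam ^ 2))))
    (z : ℝ → ℝ) (hz : ∀ t : ℝ, z t = f (c t)) :
    ContinuousOn z (Set.Ici 0) ∧
      (∀ t : ℝ, 0 ≤ t → 0 ≤ z t) ∧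
      (∀ t : ℝ, 0 ≤ t → c t = ∫ s in (0 : ℝ)..t, z s) ∧
      (∀ t : ℝ, 0 ≤ t →
        z t = x + lam * (∫ s in (0 : ℝ)..t, z s)
          - (1 / 2) * (∫ s in (0 : ℝ)..t, z s) ^ 2) := by
  set a : ℝ := Real.sqrt (2 * x + lam ^ 2) with ha_def
  have hpos : (0:ℝ) < 2 * x + lam ^ 2 := by positivity
  have ha : 0 < a := Real.sqrt_pos.mpr hpos
  have ha2 : a ^ 2 = 2 * x + lam ^ 2 := Real.sq_sqrt hpos.le
  set θ : ℝ := Real.artanhLog (-lam / a) with hθ_def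
  set s : ℝ → ℝ := fun t => a / 2 * t + θ with hs_def
  -- z in cosh form
  have hzt : ∀ t, z t = a ^ 2 / 2 * (1 / Real.cosh (s t) ^ 2) := by
    intro t
    rw [hz, hf, hc]
    rw [← one_sub_tanh_sq]
    simp only [hs_def]
    have := ha2
    ring_nf
    nlinarith [this, sq_nonneg (Real.tanh (s t))]
  -- continuity of z on all of ℝ
  have hzc : Continuous z := by
    have : z = fun t => a ^ 2 / 2 * (1 / Real.cosh (s t) ^ 2) := funext hzt
    rw [this]
    apply Continuous.mul continuous_const
    apply Continuous.div continuous_const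
    · exact (Real.continuous_cosh.comp (by continuity)).pow 2
    · intro t; exact pow_ne_zero 2 (Real.cosh_pos _).ne'
  -- nonnegativity
  have hznn : ∀ t : ℝ, 0 ≤ z t := by
    intro t; rw [hzt]; positivity
  -- derivative of c
  have hderiv : ∀ t : ℝ, HasDerivAt c (z t) t := by
    intro t
    have h1 : HasDerivAt (fun t : ℝ => a / 2 * t + θ) (a / 2) t := by
      simpa using ((hasDerivAt_id t).const_mul (a / 2)).add_const θ
    have h2 := (hasDerivAt_tanh' (s t)).comp t h1
    have h3 := (h2.const_mul a).const_add lam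
    have : c = fun t => lam + a * Real.tanh (a / 2 * t + θ) := funext hc
    rw [this]
    refine HasDerivAt.congr_deriv h3 ?_
    rw [hzt]
    simp only [hs_def]
    ring
  -- c 0 = 0
  have hlam : |lam| < a := by
    rw [← Real.sqrt_sq_eq_abs, ha_def]
    exact Real.sqrt_lt_sqrt (sq_nonneg _) (by linarith)
  have hc0 : c 0 = 0 := by
    rw [hc]
    have habs : |(-lam / a)| < 1 := by
      rw [abs_div, abs_neg, abs_of_pos ha]
      exact (div_lt_one ha).mpr hlam
    obtain ⟨h1, h2⟩ := abs_lt.mp habs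
    simp only [mul_zero, zero_add]
    rw [tanh_artanh' _ h1 h2]
    field_simp
    ring
  -- integral identity
  have hint : ∀ t : ℝ, c t = ∫ u in (0:ℝ)..t, z u := by
    intro t
    have := intervalIntegral.integral_eq_sub_of_hasDerivAt
      (f := c) (f' := z) (a := 0) (b := t)
      (fun u _ => hderiv u) (hzc.intervalIntegrable 0 t)
    rw [this, hc0, sub_zero]
  refine ⟨hzc.continuousOn, fun t _ => hznn t, fun t _ => hint t, fun t _ => ?_⟩
  rw [← hint t, hz, hf]
  ring
end
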